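/- arXiv:1407.1210 — 9 statements merged into one kernel-verified Lean document; each statement's English description precedes it below -/
import Mathlib

section
/- Let C be an isomorphism-closed class of topological spaces. Then the following are equivalent: (1) C is closed under products, closed under subspaces, and closed under continuous bijective images; (2) C is the class of all topological spaces with at most one point, or the class of all indiscrete topological spaces, or the class of all topological spaces. -/
universe u

open Topology

/-- A class of topological spaces (in a fixed universe `u`). -/
abbrev TopClass := ∀ X : Type u, TopologicalSpace X → Prop

/-- `C` is closed under homeomorphisms. -/
def TopClass.IsoClosed (C : TopClass.{u}) : Prop :=
  ∀ (X Y : Type u) (tX : TopologicalSpace X) (tY : TopologicalSpace Y),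
    C X tX → Nonempty (@Homeomorph X Y tX tY) → C Y tY

/-- `C` is closed under arbitrary products (with the product topology). -/
def TopClass.ClosedUnderProducts (C : TopClass.{u}) : Prop :=
  ∀ (ι : Type u) (X : ι → Type u) (t : ∀ i, TopologicalSpace (X i)),
    (∀ i, C (X i) (t i)) → C (∀ i, X i) (@Pi.topologicalSpace ι X t)

/-- `C` is closed under subspaces (topological embeddings). -/
def TopClass.ClosedUnderSubspaces (C : TopClass.{u}) : Prop :=
  ∀ (X Y : Type u) (tX : TopologicalSpace X) (tY : TopologicalSpace Y),
    C X tX → (∃ f : Y → X, @IsEmbedding Y X tY tX f) → C Y tY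

/-- `C` is closed under continuous bijective images. -/
def TopClass.ClosedUnderContinuousBijectiveImages (C : TopClass.{u}) : Prop :=
  ∀ (X Y : Type u) (tX : TopologicalSpace X) (tY : TopologicalSpace Y),
    C X tX → (∃ f : X → Y, @Continuous X Y tX tY f ∧ Function.Bijective f) → C Y tY

/-- A topological space is indiscrete if its only open sets are `∅` and the whole space. -/
def IsIndiscreteTop (X : Type u) (tX : TopologicalSpace X) : Prop :=
  ∀ s : Set X, @IsOpen X tX s → s = ∅ ∨ s = Set.univ

/- ### Auxiliary lemmas -/

lemma topology_eq_of_subsingleton {X : Type u} (hX : Subsingleton X)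
    (t1 t2 : TopologicalSpace X) : t1 = t2 := by
  have hset : ∀ s : Set X, s = ∅ ∨ s = Set.univ := by
    intro s
    rcases s.eq_empty_or_nonempty with h | ⟨x, hx⟩
    · exact Or.inl h
    · right; ext y
      simp only [Set.mem_univ, iff_true]
      rwa [hX.elim y x]
  rw [TopologicalSpace.ext_iff]
  intro s
  rcases hset s with rfl | rfl
  · exact iff_of_true (@isOpen_empty _ t1) (@isOpen_empty _ t2)
  · exact iff_of_true (@isOpen_univ _ t1) (@isOpen_univ _ t2)

lemma indiscrete_iff_top {X : Type u} (t : TopologicalSpace X) :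
    IsIndiscreteTop X t ↔ t = ⊤ := by
  constructor
  · intro h
    refine le_antisymm le_top ?_
    rw [TopologicalSpace.le_def]
    intro s hs
    rw [TopologicalSpace.isOpen_top_iff]
    exact h s hs
  · rintro rfl s hs
    rwa [TopologicalSpace.isOpen_top_iff] at hs

lemma pi_top {ι : Type u} (X : ι → Type u) :
    (@Pi.topologicalSpace ι X (fun _ => ⊤)) = ⊤ := by
  simp [Pi.topologicalSpace, induced_top]

/-- A two-point carrier for the Sierpiński space in `Type u`. -/
abbrev SierpU : Type u := ULift.{u} Bool

/-- The Sierpiński topology on `SierpU`. -/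
def sierpTopU : TopologicalSpace SierpU.{u} :=
  sierpinskiSpace.induced (fun x => x.down = true)

lemma sierpTopU_def :
    sierpTopU.{u} = sierpinskiSpace.induced (fun x : SierpU.{u} => x.down = true) := rfl

open Classical in
/-- The point of the Sierpiński space attached to a proposition. -/
noncomputable def toS (p : Prop) : SierpU.{u} := ⟨if p then true else false⟩

lemma toS_eq_true (p : Prop) : ((toS.{u} p).down = true) = p := by
  by_cases h : p <;> simp [toS, h]

lemma eq_iInf_induced_sierpU (Y : Type u) (tY : TopologicalSpace Y) :
    tY = ⨅ U : @TopologicalSpace.Opens Y tY,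
      sierpTopU.{u}.induced (fun y => toS.{u} (y ∈ U)) := by
  letI := tY
  refine (TopologicalSpace.eq_induced_by_maps_to_sierpinski Y).trans (iInf_congr fun U => ?_)
  rw [sierpTopU_def, induced_compose]
  exact congrArg (fun f : Y → Prop => sierpinskiSpace.induced f)
    (funext fun y => (toS_eq_true _).symm)

theorem epireflective_closed_under_bimorphic_images_Top
    (C : TopClass.{u}) (hiso : C.IsoClosed) :
    (C.ClosedUnderProducts ∧ C.ClosedUnderSubspaces ∧
        C.ClosedUnderContinuousBijectiveImages) ↔
      ((∀ (X : Type u) (tX : TopologicalSpace X), C X tX ↔ Subsingleton X) ∨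
       (∀ (X : Type u) (tX : TopologicalSpace X), C X tX ↔ IsIndiscreteTop X tX) ∨
       (∀ (X : Type u) (tX : TopologicalSpace X), C X tX)) := by
  classical
  constructor
  · rintro ⟨hprod, hsub, hbij⟩
    -- Step 0 : every subsingleton space is in `C`.
    have hsingle : ∀ (Y : Type u) (tY : TopologicalSpace Y), Subsingleton Y → C Y tY := by
      intro Y tY hY
      letI instE : ∀ i : PEmpty.{u+1}, TopologicalSpace (PEmpty.elim i) := fun i => PEmpty.elim i
      letI := tY
      have hZ := hprod PEmpty.{u+1} (fun i => PEmpty.elim i) instE (fun i => PEmpty.elim i)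
      refine hsub _ Y _ tY hZ ⟨fun _ i => PEmpty.elim i, ⟨?_⟩, ?_⟩
      · exact topology_eq_of_subsingleton hY _ _
      · intro p q _; exact hY.elim p q
    by_cases h1 : ∀ (X : Type u) (tX : TopologicalSpace X), C X tX → Subsingleton X
    · left
      exact fun X tX => ⟨h1 X tX, fun h => hsingle X tX h⟩
    · push_neg at h1
      obtain ⟨X₀, t₀, hC₀, hns⟩ := h1
      obtain ⟨a, b, hab⟩ := hns.exists_pair_ne
      by_cases h2 : ∀ (X : Type u) (tX : TopologicalSpace X), C X tX → IsIndiscreteTop X tX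
      · right; left
        intro Y tY
        refine ⟨h2 Y tY, fun hind => ?_⟩
        have htY : tY = ⊤ := (indiscrete_iff_top tY).mp hind
        have ht₀ : t₀ = ⊤ := (indiscrete_iff_top t₀).mp (h2 X₀ t₀ hC₀)
        have hP := hprod Y (fun _ => X₀) (fun _ => t₀) (fun _ => hC₀)
        refine hsub _ Y _ tY hP ⟨fun y y' => if y' = y then a else b,
          @IsEmbedding.mk Y _ tY _ _ (@IsInducing.mk Y _ tY _ _ ?_) ?_⟩
        · rw [htY, ht₀, pi_top, induced_top]
        · intro y₁ y₂ h
          by_contra hne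
          have h' : (if y₁ = y₁ then a else b) = (if y₁ = y₂ then a else b) := congrFun h y₁
          rw [if_pos rfl, if_neg hne] at h'
          exact hab h'
      · right; right
        push_neg at h2
        obtain ⟨X₁, t₁, hC₁, hni⟩ := h2
        rw [IsIndiscreteTop] at hni
        push_neg at hni
        obtain ⟨s, hsOpen, hsne, hsnu⟩ := hni
        obtain ⟨uu, hu⟩ := hsne
        obtain ⟨vv, hv⟩ : ∃ x, x ∉ s := by
          by_contra hc; push_neg at hc
          exact hsnu (Set.eq_univ_of_forall hc)
        letI := t₁
        -- The two-point subspace `{uu, vv}` of `X₁` is in `C`.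
        letI tT : TopologicalSpace {x : X₁ // x = uu ∨ x = vv} := instTopologicalSpaceSubtype
        have hT : C {x : X₁ // x = uu ∨ x = vv} tT :=
          hsub X₁ _ t₁ tT hC₁ ⟨Subtype.val, IsEmbedding.subtypeVal⟩
        -- The Sierpiński space is a continuous bijective image of it.
        have hS : C SierpU.{u} sierpTopU.{u} := by
          refine hbij _ SierpU.{u} _ sierpTopU.{u} hT
            ⟨fun x => toS.{u} ((x : X₁) ∈ s), ?_, ?_, ?_⟩
          · rw [sierpTopU_def]
            apply continuous_induced_rng.2
            have heq : ((fun z : SierpU.{u} => z.down = true) ∘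
                (fun x : {x : X₁ // x = uu ∨ x = vv} => toS.{u} ((x : X₁) ∈ s)))
                = fun x : {x : X₁ // x = uu ∨ x = vv} => ((x : X₁) ∈ s) :=
              funext fun x => toS_eq_true _
            rw [heq]
            exact continuous_Prop.2 (hsOpen.preimage continuous_subtype_val)
          · intro x y hxy
            have hxy' : toS.{u} ((x : X₁) ∈ s) = toS.{u} ((y : X₁) ∈ s) := hxy
            have hp : ((x : X₁) ∈ s) = ((y : X₁) ∈ s) := by
              rw [← toS_eq_true ((x : X₁) ∈ s), ← toS_eq_true ((y : X₁) ∈ s), hxy']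
            rcases x.2 with hx | hx <;> rcases y.2 with hy | hy
            · exact Subtype.ext (hx.trans hy.symm)
            · exfalso; rw [hx, hy] at hp
              exact hv (cast hp hu)
            · exfalso; rw [hx, hy] at hp
              exact hv (cast hp.symm hu)
            · exact Subtype.ext (hx.trans hy.symm)
          · rintro ⟨b'⟩
            cases b' with
            | true =>
              refine ⟨⟨uu, Or.inl rfl⟩, ?_⟩
              simp [toS, hu]
            | false =>
              refine ⟨⟨vv, Or.inr rfl⟩, ?_⟩
              simp [toS, hv]
        -- The indiscrete two-point space is a continuous bijective image of Sierpiński.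
        have hI : C SierpU.{u} ⊤ :=
          hbij _ _ sierpTopU.{u} ⊤ hS ⟨id, continuous_id_iff_le.2 le_top, Function.bijective_id⟩
        -- Now any space embeds into a suitable product.
        intro Y tY
        let ι : Type u := (@TopologicalSpace.Opens Y tY) ⊕ Y
        let tfam : ι → TopologicalSpace SierpU.{u} :=
          fun i => match i with
            | Sum.inl _ => sierpTopU.{u}
            | Sum.inr _ => ⊤
        have hP : C (ι → SierpU.{u}) (@Pi.topologicalSpace ι (fun _ => SierpU.{u}) tfam) := by
          refine hprod ι (fun _ => SierpU.{u}) tfam (fun i => ?_)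
          cases i with
          | inl U => exact hS
          | inr y => exact hI
        let e : Y → ι → SierpU.{u} := fun y i =>
          match i with
          | Sum.inl U => toS.{u} (y ∈ U)
          | Sum.inr y' => toS.{u} (y = y')
        refine hsub _ Y _ tY hP ⟨e,
          @IsEmbedding.mk Y _ tY _ e (@IsInducing.mk Y _ tY _ e ?_) ?_⟩
        · have hdef : (@Pi.topologicalSpace ι (fun _ => SierpU.{u}) tfam)
              = ⨅ i : ι, TopologicalSpace.induced (fun f : ι → SierpU.{u} => f i) (tfam i) := rfl
          rw [hdef, induced_iInf, iInf_sum]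
          have h2 : (⨅ y' : Y,
              ((TopologicalSpace.induced (fun f : ι → SierpU.{u} => f (Sum.inr y'))
                (tfam (Sum.inr y'))).induced e)) = ⊤ :=
            iInf_eq_top.mpr fun y' => by rw [induced_compose]; exact induced_top
          rw [h2, inf_top_eq]
          refine (eq_iInf_induced_sierpU Y tY).trans (iInf_congr fun U => ?_)
          rw [induced_compose]
          rfl
        · intro y₁ y₂ h
          have h' : toS.{u} (y₁ = y₁) = toS.{u} (y₂ = y₁) := congrFun h (Sum.inr y₁)
          have hp : (y₁ = y₁) = (y₂ = y₁) := by
            rw [← toS_eq_true (y₁ = y₁), ← toS_eq_true (y₂ = y₁), h']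
          exact (cast hp rfl).symm
  · rintro (h | h | h)
    · refine ⟨?_, ?_, ?_⟩
      · intro ι X t hX
        rw [h]
        haveI : ∀ i, Subsingleton (X i) := fun i => (h _ _).mp (hX i)
        infer_instance
      · intro X Y tX tY hX hf
        obtain ⟨f, hf⟩ := hf
        rw [h] at hX ⊢
        exact ⟨fun p q => hf.injective (hX.elim _ _)⟩
      · intro X Y tX tY hX hf
        obtain ⟨f, _, hb⟩ := hf
        rw [h] at hX ⊢
        constructor
        intro p q
        obtain ⟨x, rfl⟩ := hb.2 p
        obtain ⟨y, rfl⟩ := hb.2 q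
        exact congrArg f (hX.elim x y)
    · refine ⟨?_, ?_, ?_⟩
      · intro ι X t hX
        rw [h, indiscrete_iff_top]
        obtain rfl : t = fun _ => ⊤ :=
          funext fun i => (indiscrete_iff_top _).mp ((h _ _).mp (hX i))
        exact pi_top X
      · intro X Y tX tY hX hf
        obtain ⟨f, hf⟩ := hf
        rw [h, indiscrete_iff_top]
        rw [h, indiscrete_iff_top] at hX
        rw [hf.eq_induced, hX, induced_top]
      · intro X Y tX tY hX hf
        obtain ⟨f, hc, hb⟩ := hf
        rw [h] at hX ⊢
        intro s hs
        have hpre := hX (f ⁻¹' s) (hc.isOpen_preimage s hs)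
        rcases hpre with hpre | hpre
        · left
          rw [← Set.image_preimage_eq s hb.2, hpre, Set.image_empty]
        · right
          rw [← Set.image_preimage_eq s hb.2, hpre, Set.image_univ,
            Set.range_eq_univ.mpr hb.2]
    · exact ⟨fun ι X t _ => h _ _, fun X Y tX tY _ _ => h _ _, fun X Y tX tY _ _ => h _ _⟩
end

section
/- Let C be an isomorphism-closed class of uniform spaces. Then the following are equivalent: (1) C is closed under products, closed under subspaces, and closed under uniformly continuous bijective images; (2) C is one of the following: the class of all uniform spaces with at most one point; the class of all indiscrete uniform spaces; the class of all uniform spaces of covering character at most λ₀, for some infinite cardinal λ₀; the class of all uniform spaces. -/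
universe u

open Uniformity

/-- A class of uniform spaces (in a fixed universe `u`). -/
abbrev UnifClass := ∀ X : Type u, UniformSpace X → Prop

/-- `C` is closed under uniform isomorphisms. -/
def UnifClass.IsoClosed (C : UnifClass.{u}) : Prop :=
  ∀ (X Y : Type u) (uX : UniformSpace X) (uY : UniformSpace Y),
    C X uX → Nonempty (@UniformEquiv X Y uX uY) → C Y uY

/-- `C` is closed under arbitrary products (with the product uniformity). -/
def UnifClass.ClosedUnderProducts (C : UnifClass.{u}) : Prop :=
  ∀ (ι : Type u) (X : ι → Type u) (t : ∀ i, UniformSpace (X i)),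
    (∀ i, C (X i) (t i)) → C (∀ i, X i) (@Pi.uniformSpace ι X t)

/-- `C` is closed under subspaces (uniform embeddings). -/
def UnifClass.ClosedUnderSubspaces (C : UnifClass.{u}) : Prop :=
  ∀ (X Y : Type u) (uX : UniformSpace X) (uY : UniformSpace Y),
    C X uX → (∃ f : Y → X, @IsUniformEmbedding Y X uY uX f) → C Y uY

/-- `C` is closed under uniformly continuous bijective images. -/
def UnifClass.ClosedUnderBijectiveImages (C : UnifClass.{u}) : Prop :=
  ∀ (X Y : Type u) (uX : UniformSpace X) (uY : UniformSpace Y),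
    C X uX → (∃ f : X → Y, @UniformContinuous X Y uX uY f ∧ Function.Bijective f) → C Y uY

/-- A uniform space is indiscrete if its only entourage is the whole square. -/
def IsIndiscreteUnif (X : Type u) (uX : UniformSpace X) : Prop :=
  ∀ V ∈ @uniformity X uX, V = Set.univ

/-- A subset of a uniform space is uniformly discrete if some entourage separates
all pairs of its distinct points. -/
def IsUniformlyDiscrete {X : Type u} (uX : UniformSpace X) (S : Set X) : Prop :=
  ∃ V ∈ @uniformity X uX, ∀ x ∈ S, ∀ y ∈ S, x ≠ y → (x, y) ∉ V

/-- A uniform space has covering character at most `lam` if every uniformly discrete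
subset has cardinality strictly less than `lam`. -/
def CovCharLE (X : Type u) (uX : UniformSpace X) (lam : Cardinal.{u}) : Prop :=
  ∀ S : Set X, IsUniformlyDiscrete uX S → Cardinal.mk S < lam

/-! ### Auxiliary lemmas -/

open Filter Set

section AuxLemmas

lemma isIndiscreteUnif_iff_top {X : Type u} (uX : UniformSpace X) :
    IsIndiscreteUnif X uX ↔ @uniformity X uX = ⊤ := by
  constructor
  · intro h
    apply le_antisymm le_top
    intro V hV
    exact Filter.mem_top.2 (h V hV)
  · intro h V hV
    rw [h] at hV
    exact Filter.mem_top.1 hV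

lemma subsingleton_uniformity' {X : Type u} (uX : UniformSpace X) (hX : Subsingleton X) :
    @uniformity X uX = ⊤ := by
  apply le_antisymm le_top
  intro V hV
  refine Filter.mem_top.2 (Set.eq_univ_of_forall fun p => ?_)
  have h1 : p.1 = p.2 := Subsingleton.elim _ _
  have h2 : SetRel.id ⊆ V :=
    Filter.mem_principal.1 (Filter.le_def.1 (@refl_le_uniformity X uX) V hV)
  exact h2 (SetRel.mem_id.2 h1)

lemma isUniformEmbedding_of_comap_eq' {X Y : Type u} {uX : UniformSpace X}
    {uY : UniformSpace Y} {f : Y → X} (hinj : Function.Injective f)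
    (h : Filter.comap (fun p : Y × Y => (f p.1, f p.2)) (@uniformity X uX)
        = @uniformity Y uY) :
    @IsUniformEmbedding Y X uY uX f :=
  ⟨⟨h⟩, hinj⟩

lemma idRel_entourage_of_discrete {X : Type u} (uX : UniformSpace X) {S : Set X}
    {V : Set (X × X)} (hV : V ∈ @uniformity X uX)
    (hsep : ∀ x ∈ S, ∀ y ∈ S, x ≠ y → (x, y) ∉ V) :
    Filter.comap (fun p : S × S => ((p.1 : X), (p.2 : X))) (@uniformity X uX)
      = 𝓟 SetRel.id := by
  apply le_antisymm
  · rw [Filter.le_principal_iff]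
    refine Filter.mem_comap.2 ⟨V, hV, ?_⟩
    rintro ⟨x, y⟩ hxy
    rw [SetRel.mem_id]
    by_contra hne
    exact hsep x x.2 y y.2 (fun h => hne (Subtype.ext h)) hxy
  · intro W hW
    obtain ⟨V', hV', hsub⟩ := Filter.mem_comap.1 hW
    refine Filter.mem_principal.2 ?_
    rintro ⟨x, y⟩ hxy
    rw [SetRel.mem_id] at hxy
    subst hxy
    exact hsub (by
      show ((x : X), (x : X)) ∈ V'
      exact @refl_mem_uniformity X uX _ _ hV')

lemma discrete_inj_comap {Z W : Type u} {f : Z → W} (hinj : Function.Injective f) :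
    Filter.comap (fun p : Z × Z => (f p.1, f p.2)) (@uniformity W ⊥)
      = @uniformity Z ⊥ := by
  rw [bot_uniformity, bot_uniformity, Filter.comap_principal]
  congr 1
  ext ⟨x, y⟩
  simp only [Set.mem_preimage, SetRel.mem_id]
  exact ⟨fun h => hinj h, fun h => congrArg f h⟩

lemma uc_id_of_le' {Y : Type u} (u v : UniformSpace Y)
    (h : @uniformity Y u ≤ @uniformity Y v) :
    @UniformContinuous Y Y u v id :=
  Filter.tendsto_id'.mpr h

lemma pi_indiscrete {ι : Type u} {X : ι → Type u} (t : ∀ i, UniformSpace (X i))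
    (h : ∀ i, @uniformity (X i) (t i) = ⊤) :
    @uniformity (∀ i, X i) (@Pi.uniformSpace ι X t) = ⊤ := by
  rw [@Pi.uniformity ι X t]
  simp only [h, Filter.comap_top, iInf_top]

lemma chi_injective {Z W : Type u} [DecidableEq Z] {a b : W} (hab : a ≠ b) :
    Function.Injective (fun z : Z => (fun w : Z => if w = z then a else b)) := by
  intro z z' h
  by_contra hne
  have h2 : (if z = z then a else b) = (if z = z' then a else b) := congrFun h z
  rw [if_pos rfl, if_neg hne] at h2
  exact hab h2

lemma pi_discrete_univ_uniformlyDiscrete {Z : Type u} [Finite Z] (D : Z → Type u) :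
    IsUniformlyDiscrete (@Pi.uniformSpace Z D (fun _ => ⊥)) (Set.univ) := by
  refine ⟨⋂ z : Z, (fun p : (∀ w, D w) × (∀ w, D w) => (p.1 z, p.2 z)) ⁻¹' SetRel.id,
    ?_, ?_⟩
  · rw [@Pi.uniformity Z D (fun _ => ⊥)]
    refine Filter.iInter_mem.2 fun z => Filter.mem_iInf_of_mem z ?_
    exact Filter.preimage_mem_comap (Filter.mem_principal_self _)
  · intro x _ y _ hne hmem
    apply hne
    funext z
    have h2 := Set.mem_iInter.1 hmem z
    rwa [Set.mem_preimage, SetRel.mem_id] at h2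

lemma covCharLE_of_embedding {lam : Cardinal.{u}} {X Y : Type u}
    {uX : UniformSpace X} {uY : UniformSpace Y} {f : Y → X}
    (hf : @IsUniformEmbedding Y X uY uX f)
    (h : CovCharLE X uX lam) : CovCharLE Y uY lam := by
  intro S hS
  obtain ⟨W, hW, hsep⟩ := hS
  rw [← hf.1.comap_uniformity] at hW
  obtain ⟨V, hV, hsub⟩ := Filter.mem_comap.1 hW
  have himg : IsUniformlyDiscrete uX (f '' S) := by
    refine ⟨V, hV, ?_⟩
    rintro _ ⟨x, hx, rfl⟩ _ ⟨y, hy, rfl⟩ hne hmem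
    exact hsep x hx y hy (fun h => hne (congrArg f h)) (hsub hmem)
  have h2 := h (f '' S) himg
  rwa [Cardinal.mk_image_eq hf.2] at h2

lemma covCharLE_of_bij_image {lam : Cardinal.{u}} {X Y : Type u}
    {uX : UniformSpace X} {uY : UniformSpace Y} {f : X → Y}
    (hf : @UniformContinuous X Y uX uY f) (hbij : Function.Bijective f)
    (h : CovCharLE X uX lam) : CovCharLE Y uY lam := by
  intro S hS
  obtain ⟨V, hV, hsep⟩ := hS
  have hpre : IsUniformlyDiscrete uX (f ⁻¹' S) := by
    refine ⟨(fun p : X × X => (f p.1, f p.2)) ⁻¹' V, hf hV, ?_⟩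
    intro x hx y hy hne hmem
    exact hsep (f x) hx (f y) hy (fun h => hne (hbij.1 h)) hmem
  have h2 := h (f ⁻¹' S) hpre
  rwa [← Set.image_preimage_eq S hbij.2, Cardinal.mk_image_eq hbij.1]

lemma exists_maximal_separated {X : Type u} (U : Set (X × X)) :
    ∃ T, Maximal (· ∈ {T : Set X | ∀ x ∈ T, ∀ y ∈ T, x ≠ y → (x, y) ∉ U}) T := by
  apply zorn_subset
  intro c hc hchain
  refine ⟨⋃₀ c, ?_, fun s hs => Set.subset_sUnion_of_mem hs⟩
  intro x hx y hy hne
  obtain ⟨s, hs, hxs⟩ := hx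
  obtain ⟨s', hs', hys'⟩ := hy
  rcases hchain.total hs hs' with hss | hss
  · exact hc hs' x (hss hxs) y hys' hne
  · exact hc hs x hxs y (hss hys') hne

lemma exists_near_of_maximal {X : Type u} (uX : UniformSpace X) {U : Set (X × X)}
    (hU : U ∈ @uniformity X uX) (hUsymm : SetRel.IsSymm U) {T : Set X}
    (hT : Maximal (· ∈ {T : Set X | ∀ x ∈ T, ∀ y ∈ T, x ≠ y → (x, y) ∉ U}) T)
    (x : X) : ∃ t : T, ((t : X), x) ∈ U := by
  by_cases hx : x ∈ T
  · exact ⟨⟨x, hx⟩, @refl_mem_uniformity X uX _ _ hU⟩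
  by_contra hnone
  push_neg at hnone
  have hmem : T ∪ {x} ∈ {T : Set X | ∀ x ∈ T, ∀ y ∈ T, x ≠ y → (x, y) ∉ U} := by
    rintro a (ha | rfl) b (hb | rfl) hne
    · exact hT.1 a ha b hb hne
    · exact hnone ⟨a, ha⟩
    · intro hmem
      exact hnone ⟨b, hb⟩ (Std.Symm.symm (self := hUsymm) _ _ hmem)
    · exact absurd rfl hne
  have h2 := hT.2 hmem Set.subset_union_left
  exact hx (h2 (Set.mem_union_right T rfl))

lemma exists_partition {Y : Type u} (uY : UniformSpace Y) {lam : Cardinal.{u}}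
    (hY : CovCharLE Y uY lam) {V : Set (Y × Y)} (hV : V ∈ @uniformity Y uY) :
    ∃ (S : Set Y) (f : Y → S), Cardinal.mk S < lam ∧
      ∀ x y : Y, f x = f y → (x, y) ∈ V := by
  obtain ⟨U, hU, hUsymm, hUcomp⟩ := @comp_symm_mem_uniformity_sets Y uY V hV
  obtain ⟨T, hT⟩ := exists_maximal_separated (X := Y) U
  have hcard : Cardinal.mk T < lam := hY T ⟨U, hU, hT.1⟩
  have hnear := exists_near_of_maximal uY hU hUsymm hT
  choose f hf using hnear
  refine ⟨T, f, hcard, fun x y hxy => ?_⟩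
  have h1 : ((f x : Y), x) ∈ U := hf x
  have h2 : ((f x : Y), y) ∈ U := hxy ▸ hf y
  exact hUcomp (SetRel.mem_comp.2 ⟨(f x : Y), Std.Symm.symm (self := hUsymm) _ _ h1, h2⟩)

lemma covCharLE_pi {lam : Cardinal.{u}} (hlam : Cardinal.aleph0 ≤ lam)
    {ι : Type u} {X : ι → Type u} (t : ∀ i, UniformSpace (X i))
    (h : ∀ i, CovCharLE (X i) (t i) lam) :
    CovCharLE (∀ i, X i) (@Pi.uniformSpace ι X t) lam := by
  intro S hS
  obtain ⟨V, hV, hsep⟩ := hS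
  rw [@Pi.uniformity ι X t, Filter.mem_iInf] at hV
  obtain ⟨I, hIfin, W, hW, rfl⟩ := hV
  haveI : Finite I := hIfin.to_subtype
  have hW' : ∀ i : I, ∃ Vi ∈ @uniformity (X i) (t i),
      (fun a : (∀ j, X j) × (∀ j, X j) => (a.1 i, a.2 i)) ⁻¹' Vi ⊆ W i :=
    fun i => Filter.mem_comap.1 (hW i)
  choose Vi hVi hVisub using hW'
  have hU : ∀ i : I, ∃ Ui ∈ @uniformity (X i) (t i),
      SetRel.IsSymm Ui ∧ SetRel.comp Ui Ui ⊆ Vi i :=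
    fun i => @comp_symm_mem_uniformity_sets (X i) (t i) _ (hVi i)
  choose Ui hUi hUisymm hUicomp using hU
  have hT : ∀ i : I, ∃ T, Maximal
      (· ∈ {T : Set (X i) | ∀ x ∈ T, ∀ y ∈ T, x ≠ y → (x, y) ∉ Ui i}) T :=
    fun i => exists_maximal_separated (Ui i)
  choose T hTmax using hT
  have hTcard : ∀ i : I, Cardinal.mk (T i) < lam :=
    fun i => h i (T i) ⟨Ui i, hUi i, (hTmax i).1⟩
  have hnear := fun i : I => exists_near_of_maximal (t i) (hUi i) (hUisymm i) (hTmax i)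
  choose c hc using fun i : I => hnear i
  set F : S → ∀ i : I, T i := fun s i => c i (s.1 i) with hF
  have hFinj : Function.Injective F := by
    intro s₁ s₂ heq
    apply Subtype.ext
    by_contra hne
    apply hsep s₁.1 s₁.2 s₂.1 s₂.2 hne
    apply Set.mem_iInter.2
    intro i
    apply hVisub i
    show (s₁.1 i, s₂.1 i) ∈ Vi i
    have h1 : ((c i (s₁.1 i) : X i), s₁.1 i) ∈ Ui i := hc i (s₁.1 i)
    have h2 : ((c i (s₂.1 i) : X i), s₂.1 i) ∈ Ui i := hc i (s₂.1 i)
    have hceq : c i (s₁.1 i) = c i (s₂.1 i) := congrFun heq i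
    rw [hceq] at h1
    exact hUicomp i (SetRel.mem_comp.2 ⟨_, Std.Symm.symm (self := hUisymm i) _ _ h1, h2⟩)
  have hle : Cardinal.mk S ≤ Cardinal.mk (∀ i : I, T i) :=
    Cardinal.mk_le_of_injective hFinj
  refine lt_of_le_of_lt hle ?_
  rcases isEmpty_or_nonempty I with hI | hI
  · haveI hne : Nonempty (∀ i : I, T i) := ⟨fun i => (hI.false i).elim⟩
    haveI hss : Subsingleton (∀ i : I, T i) :=
      ⟨fun f g => funext fun i => (hI.false i).elim⟩
    rw [Cardinal.mk_eq_one]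
    exact lt_of_lt_of_le Cardinal.one_lt_aleph0 hlam
  · obtain ⟨i₀, hi₀⟩ := Finite.exists_max (fun i : I => Cardinal.mk (T i))
    have hmu : Cardinal.mk (T i₀) < lam := hTcard i₀
    have hb : Cardinal.mk (∀ i : I, T i) ≤ Cardinal.mk (T i₀) ^ Cardinal.mk I := by
      rw [Cardinal.mk_pi]
      calc Cardinal.prod (fun i : I => Cardinal.mk (T i))
          ≤ Cardinal.prod (fun _ : I => Cardinal.mk (T i₀)) :=
            Cardinal.prod_le_prod _ _ hi₀
        _ = Cardinal.mk (T i₀) ^ Cardinal.mk I := Cardinal.prod_const' _ _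
    refine lt_of_le_of_lt hb ?_
    have hIcard : Cardinal.mk I < Cardinal.aleph0 := Cardinal.lt_aleph0_iff_finite.2 ‹_›
    rcases lt_or_ge (Cardinal.mk (T i₀)) Cardinal.aleph0 with hfin | hinf
    · exact lt_of_lt_of_le (Cardinal.power_lt_aleph0 hfin hIcard) hlam
    · exact lt_of_le_of_lt (Cardinal.pow_le hinf hIcard) hmu

end AuxLemmas

theorem epireflective_closed_under_bimorphic_images_Unif
    (C : UnifClass.{u}) (hiso : C.IsoClosed) :
    (C.ClosedUnderProducts ∧ C.ClosedUnderSubspaces ∧ C.ClosedUnderBijectiveImages) ↔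
      ((∀ (X : Type u) (uX : UniformSpace X), C X uX ↔ Subsingleton X) ∨
       (∀ (X : Type u) (uX : UniformSpace X), C X uX ↔ IsIndiscreteUnif X uX) ∨
       (∃ lam : Cardinal.{u}, Cardinal.aleph0 ≤ lam ∧
         ∀ (X : Type u) (uX : UniformSpace X), C X uX ↔ CovCharLE X uX lam) ∨
       (∀ (X : Type u) (uX : UniformSpace X), C X uX)) := by
  constructor
  · rintro ⟨hprod, hsub, hbij⟩
    -- Preliminaries: the one-point space and all subsingleton spaces are in `C`.
    have hpoint : C (PEmpty.{u+1} → PUnit.{u+1})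
        (@Pi.uniformSpace PEmpty.{u+1} (fun _ => PUnit.{u+1}) (fun _ => ⊥)) :=
      hprod PEmpty.{u+1} (fun _ => PUnit.{u+1}) (fun _ => ⊥) fun i => i.elim
    have hsubsing : ∀ (Z : Type u) (uZ : UniformSpace Z), Subsingleton Z → C Z uZ := by
      intro Z uZ hZ
      haveI := hZ
      refine hsub _ Z _ uZ hpoint ⟨fun _ _ => PUnit.unit,
        isUniformEmbedding_of_comap_eq' (fun x y _ => Subsingleton.elim x y) ?_⟩
      rw [subsingleton_uniformity' _
        (inferInstance : Subsingleton (PEmpty.{u+1} → PUnit.{u+1})),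
        Filter.comap_top, subsingleton_uniformity' uZ hZ]
    -- Discrete spaces injecting into a uniformly discrete subset of a member are in `C`.
    have hdisc : ∀ (X0 : Type u) (uX0 : UniformSpace X0), C X0 uX0 →
        ∀ S : Set X0, IsUniformlyDiscrete uX0 S →
        ∀ Z : Type u, (Z ↪ S) → C Z (⊥ : UniformSpace Z) := by
      intro X0 uX0 hX0 S hSdisc Z f
      obtain ⟨V, hV, hsep⟩ := hSdisc
      have h1 : C S ⊥ := hsub X0 S uX0 ⊥ hX0
        ⟨Subtype.val, isUniformEmbedding_of_comap_eq' Subtype.val_injective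
          (idRel_entourage_of_discrete uX0 hV hsep)⟩
      exact hsub S Z ⊥ ⊥ h1
        ⟨f, isUniformEmbedding_of_comap_eq' f.injective (discrete_inj_comap f.injective)⟩
    by_cases hA : ∀ (Z : Type u) (uZ : UniformSpace Z), C Z uZ → Subsingleton Z
    · left
      intro X uX
      exact ⟨hA X uX, hsubsing X uX⟩
    -- there is a member with two distinct points
    push_neg at hA
    obtain ⟨Z₀, u₀, hC₀, hns⟩ := hA
    haveI := hns
    obtain ⟨a₀, b₀, hab₀⟩ := exists_pair_ne Z₀
    by_cases hB : ∀ (Z : Type u) (uZ : UniformSpace Z), C Z uZ → IsIndiscreteUnif Z uZ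
    · right; left
      intro Y uY
      refine ⟨hB Y uY, fun hY => ?_⟩
      have hInd₀ : IsIndiscreteUnif Z₀ u₀ := hB _ _ hC₀
      have hP : C (Y → Z₀) (@Pi.uniformSpace Y (fun _ => Z₀) (fun _ => u₀)) :=
        hprod Y (fun _ => Z₀) (fun _ => u₀) fun _ => hC₀
      haveI := Classical.decEq Y
      refine hsub _ Y _ uY hP ⟨fun y => fun w => if w = y then a₀ else b₀,
        isUniformEmbedding_of_comap_eq' (chi_injective hab₀) ?_⟩
      rw [pi_indiscrete (fun _ => u₀) (fun _ => (isIndiscreteUnif_iff_top u₀).1 hInd₀),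
        Filter.comap_top]
      exact ((isIndiscreteUnif_iff_top uY).1 hY).symm
    -- there is a non-indiscrete member; extract a two-point uniformly discrete set
    push_neg at hB
    obtain ⟨X₁, u₁, hC₁, hnind⟩ := hB
    have hexV : ∃ V ∈ @uniformity X₁ u₁, V ≠ Set.univ := by
      by_contra hno
      push_neg at hno
      exact hnind hno
    obtain ⟨V, hV, hVne⟩ := hexV
    obtain ⟨p, hp⟩ := Set.ne_univ_iff_exists_notMem V |>.1 hVne
    obtain ⟨a, b⟩ := p
    have hab : a ≠ b := by
      rintro rfl
      exact hp (@refl_mem_uniformity X₁ u₁ _ _ hV)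
    have hpair : IsUniformlyDiscrete u₁ ({a, b} : Set X₁) := by
      refine ⟨SetRel.symmetrize V, @symmetrize_mem_uniformity X₁ u₁ V hV, ?_⟩
      intro x hx y hy hne hmem
      simp only [Set.mem_insert_iff, Set.mem_singleton_iff] at hx hy
      rcases hx with rfl | rfl <;> rcases hy with rfl | rfl
      · exact hne rfl
      · exact hp (SetRel.symmetrize_subset_self hmem)
      · exact hp (SetRel.symmetrize_subset_self
          ((SetRel.comm _).1 hmem))
      · exact hne rfl
    set D2 : Type u := ↥({a, b} : Set X₁) with hD2def
    have hD2 : C D2 ⊥ :=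
      hdisc X₁ u₁ hC₁ {a, b} hpair D2 (Function.Embedding.refl _)
    have pa : D2 := ⟨a, Set.mem_insert _ _⟩
    have pb : D2 := ⟨b, Set.mem_insert_of_mem _ rfl⟩
    have hpapb : (⟨a, Set.mem_insert _ _⟩ : D2) ≠ ⟨b, Set.mem_insert_of_mem _ rfl⟩ :=
      fun h => hab (congrArg Subtype.val h)
    -- all finite discrete spaces are in C
    have hfinC : ∀ Z : Type u, Finite Z → C Z (⊥ : UniformSpace Z) := by
      intro Z hfin
      haveI := hfin
      haveI := Classical.decEq Z
      have hP : C (Z → D2) (@Pi.uniformSpace Z (fun _ => D2) (fun _ => ⊥)) :=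
        hprod Z (fun _ => D2) (fun _ => ⊥) fun _ => hD2
      refine hdisc _ _ hP Set.univ (pi_discrete_univ_uniformlyDiscrete (fun _ => D2)) Z
        ⟨fun z => ⟨fun w => if w = z then ⟨a, Set.mem_insert _ _⟩
            else ⟨b, Set.mem_insert_of_mem _ rfl⟩, Set.mem_univ _⟩, ?_⟩
      intro z z' hzz
      exact chi_injective hpapb (congrArg Subtype.val hzz)
    -- all indiscrete spaces are in C
    have hindiscrC : ∀ Z : Type u, C Z (⊤ : UniformSpace Z) := by
      intro Z
      haveI := Classical.decEq Z
      have hP : C (Z → D2) (@Pi.uniformSpace Z (fun _ => D2) (fun _ => ⊥)) :=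
        hprod Z (fun _ => D2) (fun _ => ⊥) fun _ => hD2
      have hPtop : C (Z → D2) ⊤ := hbij _ _ _ ⊤ hP
        ⟨id, uc_id_of_le' _ ⊤ le_top, Function.bijective_id⟩
      refine hsub _ Z ⊤ ⊤ hPtop ⟨fun z => fun w => if w = z then ⟨a, Set.mem_insert _ _⟩
          else ⟨b, Set.mem_insert_of_mem _ rfl⟩,
        isUniformEmbedding_of_comap_eq' (chi_injective hpapb) ?_⟩
      exact Filter.comap_top
    by_cases hbd : ∃ l : Cardinal.{u}, Cardinal.aleph0 ≤ l ∧
        ∀ (Z : Type u) (uZ : UniformSpace Z), C Z uZ → CovCharLE Z uZ l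
    · -- bounded case: covering character class
      right; right; left
      have hbdne : {l : Cardinal.{u} | Cardinal.aleph0 ≤ l ∧
          ∀ (Z : Type u) (uZ : UniformSpace Z), C Z uZ → CovCharLE Z uZ l}.Nonempty := hbd
      have hmem := csInf_mem hbdne
      set lam0 := sInf {l : Cardinal.{u} | Cardinal.aleph0 ≤ l ∧
          ∀ (Z : Type u) (uZ : UniformSpace Z), C Z uZ → CovCharLE Z uZ l} with hlam0
      refine ⟨lam0, hmem.1, ?_⟩
      have hdiscSmall : ∀ Z : Type u, Cardinal.mk Z < lam0 → C Z (⊥ : UniformSpace Z) := by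
        intro Z hZ
        rcases lt_or_ge (Cardinal.mk Z) Cardinal.aleph0 with hfin | hinf
        · exact hfinC Z (Cardinal.lt_aleph0_iff_finite.1 hfin)
        · have hnotin : Cardinal.mk Z ∉ {l : Cardinal.{u} | Cardinal.aleph0 ≤ l ∧
              ∀ (Z : Type u) (uZ : UniformSpace Z), C Z uZ → CovCharLE Z uZ l} :=
            fun hin => absurd (csInf_le' hin) (not_le.2 hZ)
          have hex : ∃ Z' : Type u, ∃ uZ' : UniformSpace Z', C Z' uZ' ∧
              ¬ CovCharLE Z' uZ' (Cardinal.mk Z) := by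
            by_contra hno
            push_neg at hno
            exact hnotin ⟨hinf, hno⟩
          obtain ⟨Z', uZ', hZ', hnc⟩ := hex
          unfold CovCharLE at hnc
          push_neg at hnc
          obtain ⟨S, hSdisc, hSbig⟩ := hnc
          obtain ⟨f⟩ := (Cardinal.le_def _ _).1 hSbig
          exact hdisc Z' uZ' hZ' S hSdisc Z f
      intro Y uY
      refine ⟨hmem.2 Y uY, fun hY => ?_⟩
      -- build the fine uniformity as a subspace of a product
      have hpart : ∀ j : {V : Set (Y × Y) // V ∈ @uniformity Y uY},
          ∃ (S : Set Y) (f : Y → S), Cardinal.mk S < lam0 ∧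
            ∀ x y : Y, f x = f y → (x, y) ∈ j.1 :=
        fun j => exists_partition uY hY j.2
      choose S f hScard hffib using hpart
      let J := {V : Set (Y × Y) // V ∈ @uniformity Y uY}
      let X : Option J → Type u := fun o => match o with
        | none => Y
        | some j => ↥(S j)
      let t : ∀ o : Option J, UniformSpace (X o) := fun o => match o with
        | none => (⊤ : UniformSpace Y)
        | some j => (⊥ : UniformSpace ↥(S j))
      have hCX : ∀ o : Option J, C (X o) (t o) := by
        rintro (_ | j)
        · exact hindiscrC Y
        · exact hdiscSmall (S j) (hScard j)
      have hCP : C (∀ o, X o) (@Pi.uniformSpace (Option J) X t) := hprod _ X t hCX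
      let g : Y → ∀ o, X o := fun y o => match o with
        | none => y
        | some j => f j y
      have hginj : Function.Injective g := fun y y' h => congrFun h none
      have hCcomap : C Y (UniformSpace.comap g (@Pi.uniformSpace (Option J) X t)) :=
        hsub _ Y _ _ hCP ⟨g, isUniformEmbedding_of_comap_eq' hginj rfl⟩
      refine hbij Y Y _ uY hCcomap ⟨id, ?_, Function.bijective_id⟩
      apply uc_id_of_le'
      intro V hV
      rw [uniformity_comap]
      refine Filter.mem_comap.2 ⟨(fun p : (∀ o, X o) × (∀ o, X o) =>
          (p.1 (some ⟨V, hV⟩), p.2 (some ⟨V, hV⟩))) ⁻¹' SetRel.id, ?_, ?_⟩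
      · rw [@Pi.uniformity (Option J) X t]
        refine Filter.mem_iInf_of_mem (some ⟨V, hV⟩) (Filter.preimage_mem_comap ?_)
        show SetRel.id ∈ @uniformity ↥(S ⟨V, hV⟩) ⊥
        rw [bot_uniformity]
        exact Filter.mem_principal_self _
      · rintro ⟨x, y⟩ hmem2
        simp only [Set.mem_preimage, SetRel.mem_id] at hmem2
        exact hffib ⟨V, hV⟩ x y hmem2
    · -- unbounded case: C is everything
      right; right; right
      intro Y uY
      have hnotin : ¬ (Cardinal.aleph0 ≤ max Cardinal.aleph0 (Cardinal.mk Y) ∧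
          ∀ (Z : Type u) (uZ : UniformSpace Z), C Z uZ →
            CovCharLE Z uZ (max Cardinal.aleph0 (Cardinal.mk Y))) :=
        fun h => hbd ⟨_, h⟩
      have hex : ∃ Z' : Type u, ∃ uZ' : UniformSpace Z', C Z' uZ' ∧
          ¬ CovCharLE Z' uZ' (max Cardinal.aleph0 (Cardinal.mk Y)) := by
        by_contra hno
        push_neg at hno
        exact hnotin ⟨le_max_left _ _, hno⟩
      obtain ⟨Z', uZ', hZ', hnc⟩ := hex
      unfold CovCharLE at hnc
      push_neg at hnc
      obtain ⟨S, hSdisc, hSbig⟩ := hnc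
      have hYle : Cardinal.mk Y ≤ Cardinal.mk S :=
        le_trans (le_max_right _ _) hSbig
      obtain ⟨fe⟩ := (Cardinal.le_def _ _).1 hYle
      have hYbot : C Y (⊥ : UniformSpace Y) := hdisc Z' uZ' hZ' S hSdisc Y fe
      refine hbij Y Y ⊥ uY hYbot ⟨id, uc_id_of_le' ⊥ uY ?_, Function.bijective_id⟩
      rw [bot_uniformity]
      exact @refl_le_uniformity Y uY

  · rintro (h | h | ⟨lam, hlam, h⟩ | h)
    · -- subsingleton class
      refine ⟨?_, ?_, ?_⟩
      · intro ι X t hX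
        haveI : ∀ i, Subsingleton (X i) := fun i => (h _ _).1 (hX i)
        exact (h _ _).2 ⟨fun f g => funext fun i => Subsingleton.elim _ _⟩
      · intro X Y uX uY hX hf
        obtain ⟨f, hf⟩ := hf
        haveI := (h X uX).1 hX
        exact (h Y uY).2 ⟨fun a b => hf.2 (Subsingleton.elim _ _)⟩
      · intro X Y uX uY hX hf
        obtain ⟨f, hf, hb⟩ := hf
        haveI := (h X uX).1 hX
        refine (h Y uY).2 ⟨fun a b => ?_⟩
        obtain ⟨x, rfl⟩ := hb.2 a
        obtain ⟨y, rfl⟩ := hb.2 b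
        exact congrArg f (Subsingleton.elim x y)
    · -- indiscrete class
      refine ⟨?_, ?_, ?_⟩
      · intro ι X t hX
        refine (h _ _).2 ((isIndiscreteUnif_iff_top _).2 (pi_indiscrete t fun i =>
          (isIndiscreteUnif_iff_top _).1 ((h _ _).1 (hX i))))
      · intro X Y uX uY hX hf
        obtain ⟨f, hf⟩ := hf
        refine (h Y uY).2 ((isIndiscreteUnif_iff_top _).2 ?_)
        rw [← hf.1.comap_uniformity,
          (isIndiscreteUnif_iff_top uX).1 ((h X uX).1 hX), Filter.comap_top]
      · intro X Y uX uY hX hf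
        obtain ⟨f, hf, hb⟩ := hf
        have hXind := (h X uX).1 hX
        refine (h Y uY).2 ?_
        intro V hV
        have hpre : (fun p : X × X => (f p.1, f p.2)) ⁻¹' V ∈ @uniformity X uX := hf hV
        have hpreuniv := hXind _ hpre
        refine Set.eq_univ_of_forall fun p => ?_
        obtain ⟨x₁, hx₁⟩ := hb.2 p.1
        obtain ⟨x₂, hx₂⟩ := hb.2 p.2
        have : (x₁, x₂) ∈ (fun p : X × X => (f p.1, f p.2)) ⁻¹' V := by
          rw [hpreuniv]; trivial
        simpa [hx₁, hx₂] using this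
    · -- covering character class
      refine ⟨?_, ?_, ?_⟩
      · intro ι X t hX
        exact (h _ _).2 (covCharLE_pi hlam t fun i => (h _ _).1 (hX i))
      · intro X Y uX uY hX hf
        obtain ⟨f, hf⟩ := hf
        exact (h Y uY).2 (covCharLE_of_embedding hf ((h X uX).1 hX))
      · intro X Y uX uY hX hf
        obtain ⟨f, hf, hb⟩ := hf
        exact (h Y uY).2 (covCharLE_of_bij_image hf hb ((h X uX).1 hX))
    · exact ⟨fun ι X t _ => h _ _, fun X Y uX uY _ _ => h _ _,
        fun X Y uX uY _ _ => h _ _⟩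
end

section
/- Let E be an isomorphism-closed class of separated uniform spaces that is closed under products and closed under closed subspaces. Let X be a separated uniform space and let (X_α)_{α∈A} be a nonempty family of subsets of X such that each X_α, equipped with the subspace uniformity, belongs to E. Then the intersection ⋂_{α∈A} X_α, equipped with the subspace uniformity, belongs to E. -/
universe u

open Uniformity

/-- A uniform space is separated if the intersection of all entourages is the diagonal. -/
def IsSeparatedUnif (X : Type u) (uX : UniformSpace X) : Prop :=
  ∀ x y : X, (∀ V ∈ @uniformity X uX, (x, y) ∈ V) → x = y

/-- `C` is closed under closed subspaces (uniform embeddings with closed range). -/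
def UnifClass.ClosedUnderClosedSubspaces (C : UnifClass.{u}) : Prop :=
  ∀ (X Y : Type u) (uX : UniformSpace X) (uY : UniformSpace Y),
    C X uX →
    (∃ f : Y → X, @IsUniformEmbedding Y X uY uX f ∧
      @IsClosed X uX.toTopologicalSpace (Set.range f)) → C Y uY

/-- An epireflective class of separated uniform spaces is closed under nonempty
intersections of subspaces. -/
theorem epireflective_T2Unif_closed_under_intersections
    (E : UnifClass.{u}) (hiso : E.IsoClosed)
    (hprod : E.ClosedUnderProducts) (hclsub : E.ClosedUnderClosedSubspaces)
    (hsep : ∀ (X : Type u) (uX : UniformSpace X), E X uX → IsSeparatedUnif X uX)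
    (X : Type u) [uX : UniformSpace X] (hX : IsSeparatedUnif X uX)
    (A : Type u) [Nonempty A] (S : A → Set X)
    (hS : ∀ a : A, E (S a) inferInstance) :
    E (⋂ a : A, S a) inferInstance := by
  classical
  haveI : T0Space X := t0Space_iff_uniformity.2 hX
  set Y : Set X := ⋂ a : A, S a with hY
  let P := ∀ a : A, S a
  have hP : E P inferInstance := hprod A (fun a => ↥(S a)) _ hS
  let f : Y → P := fun y a => ⟨y.1, Set.mem_iInter.1 y.2 a⟩
  have hcomap : Filter.comap (fun p : Y × Y => (f p.1, f p.2)) (𝓤 P) = 𝓤 Y := by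
    rw [Pi.uniformity, Filter.comap_iInf]
    have key : ∀ a : A,
        Filter.comap (fun p : Y × Y => (f p.1, f p.2))
          ((Filter.comap fun q : P × P => (q.1 a, q.2 a)) (𝓤 (S a)))
          = Filter.comap (fun p : Y × Y => ((p.1 : X), (p.2 : X))) (𝓤 X) := by
      intro a
      rw [uniformity_setCoe, Filter.comap_comap, Filter.comap_comap]
      rfl
    refine (iInf_congr key).trans ?_
    rw [iInf_const, uniformity_setCoe]
    rfl
  have hinj : Function.Injective f := by
    intro y y' h
    obtain ⟨a⟩ := ‹Nonempty A›
    have h2 : ((f y a : X)) = ((f y' a : X)) := congrArg Subtype.val (congrFun h a)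
    exact Subtype.ext h2
  have hemb : IsUniformEmbedding f := ⟨⟨hcomap⟩, hinj⟩
  have hrange : Set.range f = ⋂ (a : A) (b : A), {g : P | (g a : X) = (g b : X)} := by
    ext g
    simp only [Set.mem_range, Set.mem_iInter, Set.mem_setOf_eq]
    constructor
    · rintro ⟨y, rfl⟩ a b; rfl
    · intro h
      obtain ⟨a0⟩ := ‹Nonempty A›
      refine ⟨⟨(g a0 : X), Set.mem_iInter.2 fun a => ?_⟩, ?_⟩
      · rw [h a0 a]; exact (g a).2
      · funext a
        exact Subtype.ext (h a0 a)
  have hclosed : IsClosed (Set.range f) := by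
    rw [hrange]
    refine isClosed_iInter fun a => isClosed_iInter fun b => ?_
    exact isClosed_eq
      (continuous_subtype_val.comp (continuous_apply a))
      (continuous_subtype_val.comp (continuous_apply b))
  exact hclsub P Y _ _ hP ⟨f, hemb, hclosed⟩
end

section
/- Let λ₀ be an infinite cardinal and let M be a complete metric space of covering character at most λ₀, i.e. every uniformly discrete subset of M has cardinality strictly less than λ₀. Then there exist a sequence (D_n)_{n∈ℕ} of sets, each of cardinality strictly less than λ₀ and each equipped with the discrete uniformity, a closed subset S of the product ∏_{n∈ℕ} D_n (with the product uniformity), and a uniformly continuous map f : S → M whose range is dense in M. -/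
universe u

open Uniformity

/-- Type synonym for a subset, to avoid instance diamonds with the subtype instances. -/
def DWrap {M : Type u} (s : Set M) : Type u := s

def DWrap.val {M : Type u} {s : Set M} (d : DWrap s) : M := Subtype.val d

def DWrap.mk {M : Type u} {s : Set M} (x : ↥s) : DWrap s := x

lemma DWrap.val_mem {M : Type u} {s : Set M} (d : DWrap s) : d.val ∈ s :=
  (show ↥s from d).2

lemma DWrap.mk_val {M : Type u} {s : Set M} (x : ↥s) : (DWrap.mk x).val = x.1 := rfl

lemma DWrap.card {M : Type u} (s : Set M) : Cardinal.mk (DWrap s) = Cardinal.mk s := rfl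

lemma exists_sep_net {M : Type u} [MetricSpace M] (ε : ℝ) (hε : 0 < ε) :
    ∃ T : Set M, (∀ x ∈ T, ∀ y ∈ T, x ≠ y → ε ≤ dist x y) ∧
      (∀ m : M, ∃ t ∈ T, dist m t < ε) := by
  classical
  have hch : ∀ c ⊆ {T : Set M | ∀ x ∈ T, ∀ y ∈ T, x ≠ y → ε ≤ dist x y},
      IsChain (· ⊆ ·) c → ∃ ub ∈ {T : Set M | ∀ x ∈ T, ∀ y ∈ T, x ≠ y → ε ≤ dist x y},
        ∀ s ∈ c, s ⊆ ub := by
    intro c hc hchain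
    refine ⟨⋃₀ c, ?_, fun s hs => Set.subset_sUnion_of_mem hs⟩
    rintro x ⟨s, hs, hx⟩ y ⟨t, ht, hy⟩ hxy
    rcases hchain.total hs ht with hst | hts
    · exact hc ht x (hst hx) y hy hxy
    · exact hc hs x hx y (hts hy) hxy
  obtain ⟨T, hT⟩ := zorn_subset _ hch
  · refine ⟨T, hT.prop, ?_⟩
    intro m
    by_contra h
    push_neg at h
    have hm : m ∉ T := fun hmT => by have := h m hmT; rw [dist_self] at this; linarith
    have hins : insert m T ∈ {T : Set M | ∀ x ∈ T, ∀ y ∈ T, x ≠ y → ε ≤ dist x y} := by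
      intro x hx y hy hxy
      rcases hx with rfl | hx <;> rcases hy with rfl | hy
      · exact absurd rfl hxy
      · exact h y hy
      · rw [dist_comm]; exact h x hx
      · exact hT.prop x hx y hy hxy
    have := hT.eq_of_subset hins (Set.subset_insert m T)
    exact hm (this ▸ Set.mem_insert m T)

/-- Every complete metric space of covering character at most `lam` is a dense
uniformly continuous image of a closed subspace of a countable product of
discrete uniform spaces of cardinalities `< lam`. -/
theorem dense_image_of_closed_subspace_of_prod_discrete
    (lam : Cardinal.{u}) (hlam : Cardinal.aleph0 ≤ lam)
    (M : Type u) [MetricSpace M] [CompleteSpace M]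
    (hcov : ∀ S : Set M, IsUniformlyDiscrete ‹MetricSpace M›.toUniformSpace S →
      Cardinal.mk S < lam) :
    ∃ (D : ℕ → Type u), (∀ n, Cardinal.mk (D n) < lam) ∧
      (letI : ∀ n, UniformSpace (D n) := fun _ => ⊥
       ∃ S : Set (∀ n, D n), IsClosed S ∧
         ∃ f : S → M, UniformContinuous f ∧ DenseRange f) := by
  classical
  set ε : ℕ → ℝ := fun n => (1 / 2 : ℝ) ^ n with hεdef
  have hεpos : ∀ n, 0 < ε n := fun n => by positivity
  choose T hsep hnet using fun n => exists_sep_net (M := M) (ε n) (hεpos n)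
  refine ⟨fun n => DWrap (T n), fun n => ?_, ?_⟩
  · rw [DWrap.card]
    exact hcov (T n) ⟨{p | dist p.1 p.2 < ε n}, Metric.dist_mem_uniformity (hεpos n),
      fun x hx y hy hxy hlt => absurd (hsep n x hx y hy hxy) (not_le.2 hlt)⟩
  letI : ∀ n, UniformSpace (DWrap (T n)) := fun _ => ⊥
  haveI : ∀ n, DiscreteTopology (DWrap (T n)) := fun n => ⟨rfl⟩
  set S : Set (∀ n, DWrap (T n)) :=
    {x | ∀ n, dist (x n).val (x (n + 1)).val ≤ 3 * ε n} with hSdef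
  -- Each point of S gives a Cauchy sequence in M
  have hcauchy : ∀ x : S, CauchySeq (fun n => (x.1 n).val) := by
    intro x
    exact cauchySeq_of_le_geometric (1/2) 3 (by norm_num) x.2
  choose f hf using fun x : S => cauchySeq_tendsto_of_complete (hcauchy x)
  have hb : ∀ (x : S) (n : ℕ), dist ((x.1 n).val) (f x) ≤ 6 * ε n := by
    intro x n
    have := dist_le_of_le_geometric_of_tendsto (1/2) 3 (by norm_num) x.2 (hf x) n
    calc dist ((x.1 n).val) (f x) ≤ 3 * (1/2)^n / (1 - 1/2) := this
    _ = 6 * ε n := by rw [hεdef]; ring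
  refine ⟨S, ?_, f, ?_, ?_⟩
  · -- closedness
    have : S = ⋂ n, (fun x : ∀ k, DWrap (T k) => (x n, x (n + 1))) ⁻¹'
        {p : DWrap (T n) × DWrap (T (n + 1)) | dist p.1.val p.2.val ≤ 3 * ε n} := by
      ext x; simp [hSdef, Set.mem_iInter]
    rw [this]
    exact isClosed_iInter fun n =>
      (isClosed_discrete _).preimage ((continuous_apply n).prodMk (continuous_apply (n+1)))
  · -- uniform continuity
    rw [UniformContinuous]
    rw [(Metric.uniformity_basis_dist).tendsto_right_iff]
    intro δ hδ
    obtain ⟨n, hn⟩ := exists_pow_lt_of_lt_one (div_pos hδ (by norm_num : (0:ℝ) < 12))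
      (by norm_num : (1/2 : ℝ) < 1)
    have hE' : {q : (∀ k, DWrap (T k)) × (∀ k, DWrap (T k)) | ∀ k ≤ n, q.1 k = q.2 k}
        ∈ 𝓤 (∀ k, DWrap (T k)) := by
      have heq : {q : (∀ k, DWrap (T k)) × (∀ k, DWrap (T k)) | ∀ k ≤ n, q.1 k = q.2 k}
          = ⋂ k ∈ Set.Iic n, {q : (∀ k, DWrap (T k)) × (∀ k, DWrap (T k)) | q.1 k = q.2 k} := by
        ext q; simp [Set.mem_iInter]
      rw [heq]
      refine (Filter.biInter_mem (Set.finite_Iic n)).2 fun k _ => ?_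
      rw [Pi.uniformity]
      exact Filter.mem_iInf_of_mem k
        (Filter.mem_comap.2 ⟨SetRel.id, Filter.mem_principal_self SetRel.id, fun q hq => hq⟩)
    refine Filter.eventually_iff_exists_mem.2
      ⟨{p : S × S | ∀ k ≤ n, p.1.1 k = p.2.1 k}, ?_, ?_⟩
    · rw [uniformity_setCoe]
      exact Filter.preimage_mem_comap hE'
    · intro p hp
      have hval : (p.1.1 n).val = (p.2.1 n).val := congrArg DWrap.val (hp n le_rfl)
      calc dist (f p.1) (f p.2)
          ≤ dist (f p.1) ((p.1.1 n).val) + dist ((p.2.1 n).val) (f p.2) := by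
            rw [hval]; exact dist_triangle _ _ _
        _ ≤ 6 * ε n + 6 * ε n := by
            rw [dist_comm (f p.1)]; exact add_le_add (hb p.1 n) (hb p.2 n)
        _ = 12 * (1/2)^n := by rw [hεdef]; ring
        _ < δ := by
            have h12 : (0:ℝ) < 12 := by norm_num
            calc 12 * (1/2:ℝ)^n < 12 * (δ / 12) := by
                  exact (mul_lt_mul_iff_right₀ h12).2 hn
              _ = δ := by ring
  · -- dense range (in fact surjective)
    refine Function.Surjective.denseRange ?_
    intro m
    choose t ht hdt using fun n => hnet n m
    set x : ∀ n, DWrap (T n) := fun n => DWrap.mk ⟨t n, ht n⟩ with hxdef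
    have hxS : x ∈ S := by
      intro n
      have h1 : dist (x n).val (x (n+1)).val ≤ dist (x n).val m + dist m (x (n+1)).val :=
        dist_triangle _ _ _
      rw [hxdef] at *
      simp only [DWrap.mk_val] at h1 ⊢
      have e1 : dist (t n) m < ε n := by rw [dist_comm]; exact hdt n
      have e2 : dist m (t (n+1)) < ε (n+1) := hdt (n+1)
      have e3 : ε (n+1) ≤ ε n := by
        rw [hεdef]; exact pow_le_pow_of_le_one (by norm_num) (by norm_num) (by omega)
      have e4 : 0 < ε n := hεpos n
      linarith
    have hlim : Filter.Tendsto (fun n => (x n).val) Filter.atTop (nhds m) := by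
      rw [tendsto_iff_dist_tendsto_zero]
      refine squeeze_zero (fun n => dist_nonneg) (fun n => ?_)
        (tendsto_pow_atTop_nhds_zero_of_lt_one (by norm_num : (0:ℝ) ≤ 1/2) (by norm_num))
      rw [hxdef]
      simp only [DWrap.mk_val]
      rw [dist_comm]
      exact (hdt n).le
    exact ⟨⟨x, hxS⟩, tendsto_nhds_unique (hf ⟨x, hxS⟩) hlim⟩
end

section
/- Let C be an isomorphism-closed class of topological spaces that is closed under products and closed under subspaces (i.e. C is an epireflective subcategory of Top). Then the following are equivalent: (1) C is algebraic, i.e. the full subcategory C of topological spaces has coequalizers, its underlying-set functor U : C → Set has a left adjoint, and U preserves and reflects regular epimorphisms; (2) C is the class of all topological spaces with at most one point, or C is the class of all indiscrete topological spaces. -/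
universe u

open Topology CategoryTheory CategoryTheory.Limits

/-- The full subcategory of `TopCat` determined by a class of topological spaces. -/
abbrev TopClass.Cat (C : TopClass.{u}) : Type (u + 1) :=
  ObjectProperty.FullSubcategory (fun X : TopCat.{u} => C X X.str)

/-- The underlying-set functor of the full subcategory determined by `C`. -/
noncomputable def TopClass.U (C : TopClass.{u}) : C.Cat ⥤ Type u :=
  ObjectProperty.ι _ ⋙ forget TopCat

/-- A concrete category (over `Type u`) is algebraic if it has coequalizers, its
underlying-set functor has a left adjoint and preserves and reflects regular
epimorphisms. -/
def AlgebraicConcreteCategory {D : Type (u + 1)} [Category.{u} D] (U : D ⥤ Type u) : Prop :=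
  HasCoequalizers D ∧ U.IsRightAdjoint ∧
    (∀ (A B : D) (f : A ⟶ B), Nonempty (RegularEpi f) → Nonempty (RegularEpi (U.map f))) ∧
    (∀ (A B : D) (f : A ⟶ B), Nonempty (RegularEpi (U.map f)) → Nonempty (RegularEpi f))

namespace EpiReflAux

open scoped Classical

/-- Any two topologies on a subsingleton type agree. -/
lemma topology_subsingleton {X : Type u} (hX : Subsingleton X)
    (t₁ t₂ : TopologicalSpace X) : t₁ = t₂ := by
  have key : ∀ (t : TopologicalSpace X) (s : Set X), IsOpen[t] s := by
    intro t s
    rcases s.eq_empty_or_nonempty with rfl | ⟨x, hx⟩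
    · exact @isOpen_empty X t
    · have : s = Set.univ := Set.eq_univ_of_forall fun y => (Subsingleton.elim y x) ▸ hx
      rw [this]; exact @isOpen_univ X t
  ext s
  exact ⟨fun _ => key _ _, fun _ => key _ _⟩

lemma indiscrete_eq_top {X : Type u} {t : TopologicalSpace X}
    (h : IsIndiscreteTop X t) : t = ⊤ := by
  apply le_antisymm le_top
  rw [TopologicalSpace.le_def]
  intro s hs
  rcases h s hs with rfl | rfl
  · exact @isOpen_empty X ⊤
  · exact @isOpen_univ X ⊤

lemma top_indiscrete (X : Type u) : IsIndiscreteTop X ⊤ := fun s hs =>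
  (TopologicalSpace.isOpen_top_iff s).1 hs

lemma isEmbedding_of_subsingleton {X Y : Type u} (tX : TopologicalSpace X)
    (tY : TopologicalSpace Y) (hX : Subsingleton X) (f : X → Y) :
    @IsEmbedding X Y tX tY f := by
  letI := tX; letI := tY
  exact ⟨⟨topology_subsingleton hX _ _⟩, fun a b _ => Subsingleton.elim a b⟩

/-- `C` contains every subsingleton space. -/
lemma subsingleton_mem (C : TopClass.{u}) (hprod : C.ClosedUnderProducts)
    (hsub : C.ClosedUnderSubspaces) (X : Type u) (tX : TopologicalSpace X)
    (hX : Subsingleton X) : C X tX := by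
  have hP : C (∀ _ : PEmpty.{u+1}, PUnit.{u+1})
      (@Pi.topologicalSpace PEmpty.{u+1} (fun _ => PUnit.{u+1}) (fun _ => ⊤)) :=
    hprod _ _ _ fun i => i.elim
  exact hsub _ _ _ tX hP ⟨fun _ i => i.elim, isEmbedding_of_subsingleton _ _ hX _⟩

/-- The "indicator" map into a power is an embedding of the discrete topology, when the
base point singleton is open. -/
lemma discrete_embed {T : Type u} (tT : TopologicalSpace T) {a b : T} (hab : a ≠ b)
    (ha : IsOpen[tT] {a}) (Z : Type u) :
    @IsEmbedding Z (Z → T) ⊥ (@Pi.topologicalSpace Z (fun _ => T) (fun _ => tT))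
      (fun z w => if w = z then a else b) := by
  letI := tT
  letI : TopologicalSpace Z := ⊥
  set δ : Z → Z → T := fun z w => if w = z then a else b with hδ
  have hinj : Function.Injective δ := by
    intro z z' h
    by_contra hne
    have h1 : a = if z = z' then a else b := by simpa [δ] using congrFun h z
    rw [if_neg hne] at h1
    exact hab h1
  have key : TopologicalSpace.induced δ Pi.topologicalSpace = ⊥ := by
    apply eq_bot_of_singletons_open
    intro z
    rw [isOpen_induced_iff]
    refine ⟨(fun f => f z) ⁻¹' {a}, (continuous_apply z).isOpen_preimage _ ha, ?_⟩
    ext w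
    simp only [Set.mem_preimage, Set.mem_singleton_iff, δ]
    by_cases hzw : z = w
    · subst hzw; simp
    · simp only [if_neg hzw]
      exact ⟨fun h => absurd h.symm hab, fun h => absurd h.symm hzw⟩
  exact ⟨⟨key.symm⟩, hinj⟩

/-- The "indicator" map into a power of an indiscrete space is an embedding of the
indiscrete topology. -/
lemma indiscrete_embed {T : Type u} {a b : T} (hab : a ≠ b) (Z : Type u) :
    @IsEmbedding Z (Z → T) ⊤ (@Pi.topologicalSpace Z (fun _ => T) (fun _ => ⊤))
      (fun z w => if w = z then a else b) := by
  letI : TopologicalSpace T := ⊤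
  letI : TopologicalSpace Z := ⊤
  set δ : Z → Z → T := fun z w => if w = z then a else b with hδ
  have hinj : Function.Injective δ := by
    intro z z' h
    by_contra hne
    have h1 : a = if z = z' then a else b := by simpa [δ] using congrFun h z
    rw [if_neg hne] at h1
    exact hab h1
  have hpi : (@Pi.topologicalSpace Z (fun _ => T) (fun _ => ⊤)) = ⊤ := by
    simp [Pi.topologicalSpace, induced_top]
  refine ⟨⟨?_⟩, hinj⟩
  rw [hpi, induced_top]

/-- A power of a space with two points, indexed by an infinite type, is not discrete. -/
lemma pi_not_discrete {T : Type u} (tT : TopologicalSpace T) {a b : T} (hab : a ≠ b) :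
    ¬ (@Pi.topologicalSpace (ULift.{u} ℕ) (fun _ => T) (fun _ => tT) = ⊥) := by
  letI := tT
  intro hbot
  have hopen : IsOpen[⊥] ({fun _ => b} : Set (ULift.{u} ℕ → T)) := trivial
  rw [← hbot] at hopen
  rw [isOpen_pi_iff] at hopen
  obtain ⟨I, u, hu, hsub⟩ := hopen (fun _ => b) rfl
  obtain ⟨n, hn⟩ := Infinite.exists_notMem_finset I
  have hmem : Function.update (fun _ => b) n a ∈ (I : Set (ULift.{u} ℕ)).pi u := by
    intro i hi
    have hne : i ≠ n := by rintro rfl; exact hn hi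
    rw [Function.update_of_ne hne]
    exact (hu i hi).2
  have := hsub hmem
  simp only [Set.mem_singleton_iff] at this
  have := congrFun this n
  rw [Function.update_self] at this
  exact hab this

lemma faithful_U (C : TopClass.{u}) : C.U.Faithful :=
  inferInstanceAs ((ObjectProperty.ι _ ⋙ forget TopCat).Faithful)

/-- The cofork on the identity is a colimit for any pair of equal parallel morphisms. -/
def coforkIdIsColimit {D : Type*} [Category D] {A B : D} (f g : A ⟶ B) (hfg : f = g) :
    IsColimit (Cofork.ofπ (f := f) (g := g) (𝟙 B) (by rw [hfg])) :=
  Cofork.IsColimit.mk _ (fun s => s.π) (fun s => Category.id_comp _)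
    (fun s m hm => by simpa using hm)

section Small

lemma continuous_to_subsingleton {A B : Type u} (tA : TopologicalSpace A)
    (tB : TopologicalSpace B) (hB : Subsingleton B) (f : A → B) :
    @Continuous A B tA tB f := by
  have h : tB = ⊤ := topology_subsingleton hB tB ⊤
  subst h
  exact continuous_top

variable (C : TopClass.{u})
variable (hC : ∀ (X : Type u) (tX : TopologicalSpace X), C X tX ↔ Subsingleton X)

include hC

lemma small_carrier (A : C.Cat) : Subsingleton A.obj := (hC _ _).1 A.property

lemma small_hom (A B : C.Cat) : Subsingleton (A ⟶ B) := by
  haveI := small_carrier C hC B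
  constructor
  intro f g
  apply (ObjectProperty.ι (fun X : TopCat.{u} => C X X.str)).map_injective
  exact TopCat.ext fun x => @Subsingleton.elim _ (small_carrier C hC B) _ _

lemma small_hasCoeq : HasCoequalizers C.Cat := by
  constructor
  intro F
  haveI h0 : HasColimit (parallelPair (F.map WalkingParallelPairHom.left)
      (F.map WalkingParallelPairHom.right)) := by
    haveI := small_hom C hC (F.obj WalkingParallelPair.zero) (F.obj WalkingParallelPair.one)
    have hfg : F.map WalkingParallelPairHom.left = F.map WalkingParallelPairHom.right :=
      Subsingleton.elim _ _
    exact HasColimit.mk ⟨_, coforkIdIsColimit _ _ hfg⟩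
  exact hasColimit_of_iso (diagramIsoParallelPair F)

/-- The left adjoint of the underlying-set functor, in the subsingleton case. -/
noncomputable def smallLeftAdj : Type u ⥤ C.Cat where
  obj S := ⟨@TopCat.of (ULift.{u} (PLift (Nonempty S))) ⊤, (hC _ _).2 inferInstance⟩
  map {S S'} g := ObjectProperty.homMk (@TopCat.ofHom _ _ ⊤ ⊤ (@ContinuousMap.mk (ULift.{u} (PLift (Nonempty S)))
      (ULift.{u} (PLift (Nonempty S'))) ⊤ ⊤ (fun h => ⟨⟨h.down.down.map g⟩⟩) continuous_top))
  map_id S := by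
    haveI := small_hom C hC ⟨@TopCat.of (ULift.{u} (PLift (Nonempty S))) ⊤, (hC _ _).2 inferInstance⟩
      ⟨@TopCat.of (ULift.{u} (PLift (Nonempty S))) ⊤, (hC _ _).2 inferInstance⟩
    exact Subsingleton.elim _ _
  map_comp {S S' S''} g h := by
    haveI := small_hom C hC ⟨@TopCat.of (ULift.{u} (PLift (Nonempty S))) ⊤, (hC _ _).2 inferInstance⟩
      ⟨@TopCat.of (ULift.{u} (PLift (Nonempty S''))) ⊤, (hC _ _).2 inferInstance⟩
    exact Subsingleton.elim _ _

noncomputable def smallAdj : smallLeftAdj C hC ⊣ C.U := by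
  have hsub : ∀ (S : Type u) (X : C.Cat), Subsingleton (S ⟶ C.U.obj X) := by
    intro S X
    haveI : Subsingleton (C.U.obj X) := small_carrier C hC X
    exact TypeCat.homEquiv.subsingleton
  refine Adjunction.mkOfHomEquiv
    { homEquiv := fun S X =>
        { toFun := fun φ => TypeCat.ofHom fun s => C.U.map φ (⟨⟨⟨s⟩⟩⟩ : ULift.{u} (PLift (Nonempty S)))
          invFun := fun g => ObjectProperty.homMk (@TopCat.ofHom _ X.obj ⊤ X.obj.str
            (@ContinuousMap.mk (ULift.{u} (PLift (Nonempty S))) X.obj ⊤ X.obj.str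
            (fun h => g (Classical.choice h.down.down))
            (continuous_to_subsingleton _ _ (small_carrier C hC X) _)))
          left_inv := fun φ => by
            haveI := small_hom C hC ((smallLeftAdj C hC).obj S) X
            exact Subsingleton.elim _ _
          right_inv := fun g => by
            haveI := hsub S X
            exact Subsingleton.elim _ _ }
      homEquiv_naturality_left_symm := fun {S S' X} g φ => by
        haveI := small_hom C hC ((smallLeftAdj C hC).obj S) X
        exact Subsingleton.elim _ _
      homEquiv_naturality_right := fun {S X X'} φ g => by
        haveI := hsub S X'
        exact Subsingleton.elim _ _ }

lemma small_preserves (A B : C.Cat) (f : A ⟶ B) (h : Nonempty (RegularEpi f)) :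
    Nonempty (RegularEpi (C.U.map f)) := by
  obtain ⟨re⟩ := h
  have hlr : re.left = re.right := by
    haveI := small_hom C hC re.W A
    exact Subsingleton.elim _ _
  have h4 := (coforkIdIsColimit re.left re.right hlr).comp_coconePointUniqueUpToIso_hom
    re.isColimit WalkingParallelPair.one
  simp only [Cofork.ofπ_ι_app, Category.id_comp] at h4
  haveI : IsIso f := by
    rw [← h4]
    infer_instance
  haveI : IsIso (C.U.map f) := inferInstance
  exact ⟨RegularEpi.ofSplitEpi _⟩

lemma small_reflects (A B : C.Cat) (f : A ⟶ B) (h : Nonempty (RegularEpi (C.U.map f))) :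
    Nonempty (RegularEpi f) := by
  obtain ⟨re⟩ := h
  haveI : Epi (C.U.map f) := RegularEpi.epi _ re
  haveI := small_carrier C hC A
  haveI := small_carrier C hC B
  have hsurj : Function.Surjective (C.U.map f) := (epi_iff_surjective _).1 inferInstance
  haveI : IsIso f := by
    refine ⟨ObjectProperty.homMk (@TopCat.ofHom B.obj A.obj B.obj.str A.obj.str
      (@ContinuousMap.mk B.obj A.obj B.obj.str A.obj.str (Function.surjInv hsurj)
      (continuous_to_subsingleton _ _ inferInstance _))), ?_, ?_⟩
    · haveI := small_hom C hC A A
      exact Subsingleton.elim _ _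
    · haveI := small_hom C hC B B
      exact Subsingleton.elim _ _
  exact ⟨RegularEpi.ofSplitEpi _⟩

lemma small_algebraic : AlgebraicConcreteCategory C.U :=
  ⟨small_hasCoeq C hC, ⟨smallLeftAdj C hC, ⟨smallAdj C hC⟩⟩,
    small_preserves C hC, small_reflects C hC⟩

end Small

section Indiscrete

lemma continuous_to_indiscrete {A B : Type u} (tA : TopologicalSpace A)
    (tB : TopologicalSpace B) (hB : IsIndiscreteTop B tB) (f : A → B) :
    @Continuous A B tA tB f := by
  have h : tB = ⊤ := indiscrete_eq_top hB
  subst h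
  exact continuous_top

variable (C : TopClass.{u})
variable (hC : ∀ (X : Type u) (tX : TopologicalSpace X), C X tX ↔ IsIndiscreteTop X tX)

include hC

lemma ind_full : C.U.Full := by
  refine ⟨fun {A B} g => ⟨ObjectProperty.homMk (@TopCat.ofHom A.obj B.obj A.obj.str B.obj.str
    (@ContinuousMap.mk A.obj B.obj A.obj.str B.obj.str g
    (continuous_to_indiscrete _ _ ((hC _ _).1 B.property) g))), rfl⟩⟩

lemma ind_essSurj : C.U.EssSurj := by
  constructor
  intro S
  exact ⟨⟨@TopCat.of S ⊤, (hC _ _).2 (top_indiscrete S)⟩, ⟨Iso.refl S⟩⟩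

lemma ind_equiv : C.U.IsEquivalence :=
  ⟨faithful_U C, ind_full C hC, ind_essSurj C hC⟩

lemma ind_hasCoeq : HasCoequalizers C.Cat := by
  haveI := ind_equiv C hC
  exact Adjunction.hasColimitsOfShape_of_equivalence C.U

lemma ind_preserves (A B : C.Cat) (f : A ⟶ B) (h : Nonempty (RegularEpi f)) :
    Nonempty (RegularEpi (C.U.map f)) := by
  obtain ⟨re⟩ := h
  haveI : Epi f := RegularEpi.epi _ re
  haveI := ind_equiv C hC
  haveI : Epi (C.U.map f) := C.U.map_epi f
  haveI : IsSplitEpi (C.U.map f) := isSplitEpi_of_epi _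
  exact ⟨RegularEpi.ofSplitEpi _⟩

lemma ind_reflects (A B : C.Cat) (f : A ⟶ B) (h : Nonempty (RegularEpi (C.U.map f))) :
    Nonempty (RegularEpi f) := by
  obtain ⟨re⟩ := h
  haveI : Epi (C.U.map f) := RegularEpi.epi _ re
  haveI : C.U.Full := ind_full C hC
  haveI : C.U.Faithful := faithful_U C
  have hsurj : Function.Surjective (C.U.map f) := (epi_iff_surjective _).1 inferInstance
  haveI : IsSplitEpi f := by
    refine IsSplitEpi.mk' ⟨C.U.preimage (TypeCat.ofHom (Function.surjInv hsurj)), ?_⟩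
    apply C.U.map_injective
    rw [C.U.map_comp, C.U.map_preimage, C.U.map_id]
    refine ConcreteCategory.hom_ext _ _ fun y => ?_
    exact Function.surjInv_eq hsurj y
  exact ⟨RegularEpi.ofSplitEpi _⟩

lemma ind_algebraic : AlgebraicConcreteCategory C.U := by
  haveI := ind_equiv C hC
  exact ⟨ind_hasCoeq C hC, inferInstance, ind_preserves C hC, ind_reflects C hC⟩

end Indiscrete

end EpiReflAux

namespace EpiReflAux

section Forward

variable (C : TopClass.{u})

/-- In an algebraic concrete epireflective category, bijective morphisms are isomorphisms. -/
lemma isIso_of_bijective (halg : AlgebraicConcreteCategory C.U)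
    {A B : C.Cat} (f : A ⟶ B) (hbij : Function.Bijective (C.U.map f)) : IsIso f := by
  haveI : C.U.Faithful := faithful_U C
  haveI : Epi (C.U.map f) := (epi_iff_surjective _).2 hbij.2
  haveI : IsSplitEpi (C.U.map f) := isSplitEpi_of_epi _
  obtain ⟨hre⟩ := halg.2.2.2 A B f ⟨RegularEpi.ofSplitEpi _⟩
  haveI : IsRegularEpi f := ⟨⟨hre⟩⟩
  haveI : Mono (C.U.map f) := (mono_iff_injective _).2 hbij.1
  haveI : Mono f := C.U.mono_of_mono_map this
  exact isIso_of_mono_of_strongEpi f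

lemma hom_continuous (A B : C.Cat) (g : A ⟶ B) :
    @Continuous A.obj B.obj A.obj.str B.obj.str (C.U.map g) :=
  g.hom.hom.continuous

/-- If `C` is algebraic and contains a space with an open singleton and a second point,
we reach a contradiction. -/
lemma no_open_singleton (hprod : C.ClosedUnderProducts) (hsub : C.ClosedUnderSubspaces)
    (halg : AlgebraicConcreteCategory C.U) {T : Type u} (tT : TopologicalSpace T)
    (hT : C T tT) {a b : T} (hab : a ≠ b) (ha : IsOpen[tT] {a}) : False := by
  classical
  have hY : C (ULift.{u} ℕ → T)
      (@Pi.topologicalSpace (ULift.{u} ℕ) (fun _ => T) (fun _ => tT)) :=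
    hprod _ _ _ fun _ => hT
  have hZ : C (ULift.{u} ℕ → T) ⊥ :=
    hsub ((ULift.{u} ℕ → T) → T) (ULift.{u} ℕ → T)
      (@Pi.topologicalSpace _ (fun _ => T) (fun _ => tT)) ⊥
      (hprod _ _ _ fun _ => hT)
      ⟨fun z w => if w = z then a else b, discrete_embed tT hab ha _⟩
  let Zo : C.Cat := ⟨@TopCat.of (ULift.{u} ℕ → T) ⊥, hZ⟩
  let Yo : C.Cat :=
    ⟨@TopCat.of (ULift.{u} ℕ → T) (@Pi.topologicalSpace (ULift.{u} ℕ) (fun _ => T) (fun _ => tT)), hY⟩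
  let f : Zo ⟶ Yo := ObjectProperty.homMk (@TopCat.ofHom _ _ ⊥
    (@Pi.topologicalSpace (ULift.{u} ℕ) (fun _ => T) (fun _ => tT))
    (@ContinuousMap.mk (ULift.{u} ℕ → T) (ULift.{u} ℕ → T) ⊥
    (@Pi.topologicalSpace (ULift.{u} ℕ) (fun _ => T) (fun _ => tT)) id continuous_bot))
  haveI : IsIso f := isIso_of_bijective C halg f Function.bijective_id
  have gc := hom_continuous C Yo Zo (inv f)
  have hpt : ∀ x, C.U.map (inv f) x = x := by
    intro x
    have h2 : C.U.map f ≫ C.U.map (inv f) = 𝟙 (C.U.obj Zo) := by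
      rw [← C.U.map_comp, IsIso.hom_inv_id, C.U.map_id]
    have h3 := ConcreteCategory.congr_hom h2 x
    exact h3
  have hcont : @Continuous (ULift.{u} ℕ → T) (ULift.{u} ℕ → T)
      (@Pi.topologicalSpace (ULift.{u} ℕ) (fun _ => T) (fun _ => tT)) ⊥ id :=
    @Continuous.congr (ULift.{u} ℕ → T) (ULift.{u} ℕ → T)
      (@Pi.topologicalSpace (ULift.{u} ℕ) (fun _ => T) (fun _ => tT)) ⊥
      (C.U.map (inv f)) id gc hpt
  exact pi_not_discrete tT hab (le_bot_iff.1 (continuous_id_iff_le.1 hcont))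

/-- Every member of an algebraic epireflective class is indiscrete. -/
lemma all_indiscrete (hprod : C.ClosedUnderProducts) (hsub : C.ClosedUnderSubspaces)
    (halg : AlgebraicConcreteCategory C.U) :
    ∀ (X : Type u) (tX : TopologicalSpace X), C X tX → IsIndiscreteTop X tX := by
  intro X tX hX s hs
  by_contra hcon
  push_neg at hcon
  obtain ⟨hne, hnuniv⟩ := hcon
  obtain ⟨x, hx⟩ := hne
  obtain ⟨y, hy⟩ : ∃ y, y ∉ s := by
    by_contra h; push_neg at h; exact hnuniv (Set.eq_univ_of_forall h)
  have hxy : x ≠ y := fun h => hy (h ▸ hx)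
  have hmem : C (↥({x, y} : Set X)) (TopologicalSpace.induced Subtype.val tX) :=
    hsub X _ tX _ hX ⟨Subtype.val, ⟨⟨rfl⟩, Subtype.val_injective⟩⟩
  have hab : (⟨x, Set.mem_insert x {y}⟩ : ({x, y} : Set X)) ≠
      ⟨y, Set.mem_insert_iff.2 (Or.inr rfl)⟩ :=
    fun h => hxy (congrArg Subtype.val h)
  have ha : IsOpen[TopologicalSpace.induced Subtype.val tX]
      ({⟨x, Set.mem_insert x {y}⟩} : Set ({x, y} : Set X)) := by
    refine ⟨s, hs, ?_⟩
    ext z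
    simp only [Set.mem_preimage, Set.mem_singleton_iff]
    constructor
    · intro hz
      rcases z.2 with h | h
      · exact Subtype.ext h
      · exact absurd ((Set.mem_singleton_iff.1 h) ▸ hz) hy
    · rintro rfl
      exact hx
  exact no_open_singleton C hprod hsub halg _ hmem hab ha

lemma forward_direction (hprod : C.ClosedUnderProducts) (hsub : C.ClosedUnderSubspaces)
    (halg : AlgebraicConcreteCategory C.U) :
    ((∀ (X : Type u) (tX : TopologicalSpace X), C X tX ↔ Subsingleton X) ∨
     (∀ (X : Type u) (tX : TopologicalSpace X), C X tX ↔ IsIndiscreteTop X tX)) := by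
  classical
  have hind := all_indiscrete C hprod hsub halg
  by_cases hbig : ∃ X : Type u, ∃ tX : TopologicalSpace X, C X tX ∧ ∃ x y : X, x ≠ y
  · right
    intro Z tZ
    refine ⟨hind Z tZ, fun hZ => ?_⟩
    obtain ⟨X, tX, hX, x, y, hxy⟩ := hbig
    have htX : tX = ⊤ := indiscrete_eq_top (hind X tX hX)
    have htZ : tZ = ⊤ := indiscrete_eq_top hZ
    subst htX htZ
    exact hsub (Z → X) Z (@Pi.topologicalSpace Z (fun _ => X) (fun _ => ⊤)) ⊤
      (hprod Z (fun _ => X) (fun _ => ⊤) fun _ => hX)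
      ⟨fun z w => if w = z then x else y, indiscrete_embed hxy Z⟩
  · left
    intro X tX
    constructor
    · intro hX
      refine ⟨fun x y => ?_⟩
      by_contra hxy
      exact hbig ⟨X, tX, hX, x, y, hxy⟩
    · intro hss
      exact subsingleton_mem C hprod hsub X tX hss

end Forward


end EpiReflAux

theorem epireflective_algebraic_Top
    (C : TopClass.{u}) (hiso : C.IsoClosed)
    (hprod : C.ClosedUnderProducts) (hsub : C.ClosedUnderSubspaces) :
    AlgebraicConcreteCategory C.U ↔
      ((∀ (X : Type u) (tX : TopologicalSpace X), C X tX ↔ Subsingleton X) ∨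
       (∀ (X : Type u) (tX : TopologicalSpace X), C X tX ↔ IsIndiscreteTop X tX)) := by
  constructor
  · intro halg
    exact EpiReflAux.forward_direction C hprod hsub halg
  · rintro (hC | hC)
    · exact EpiReflAux.small_algebraic C hC
    · exact EpiReflAux.ind_algebraic C hC
end

section
/- Let C be an isomorphism-closed class of uniform spaces that is closed under products and closed under subspaces (i.e. C is an epireflective subcategory of the category of uniform spaces). Then the following are equivalent: (1) C is algebraic, i.e. the full subcategory C of uniform spaces has coequalizers, its underlying-set functor U : C → Set has a left adjoint, and U preserves and reflects regular epimorphisms; (2) C is the class of all uniform spaces with at most one point, or C is the class of all indiscrete uniform spaces. -/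
universe u

open Uniformity CategoryTheory CategoryTheory.Limits

/-- The full subcategory of `UniformSpaceCat` determined by a class of uniform spaces. -/
abbrev UnifClass.Cat (C : UnifClass.{u}) : Type (u + 1) :=
  ObjectProperty.FullSubcategory (fun X : UniformSpaceCat.{u} => C X X.str)

/-- The underlying-set functor of the full subcategory determined by `C`. -/
noncomputable def UnifClass.U (C : UnifClass.{u}) : C.Cat ⥤ Type u :=
  ObjectProperty.ι _ ⋙ forget UniformSpaceCat

open Filter Set

namespace EpiRefAux

/-! ### elementary uniform space lemmas -/

lemma top_indiscrete (X : Type u) : IsIndiscreteUnif X ⊤ := fun V hV => by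
  rwa [top_uniformity, Filter.mem_top] at hV

lemma indiscrete_iff_eq_top {X : Type u} (uX : UniformSpace X) :
    IsIndiscreteUnif X uX ↔ uX = ⊤ := by
  constructor
  · intro h
    refine UniformSpace.ext ?_
    rw [top_uniformity]
    ext s
    simp only [Filter.mem_top]
    exact ⟨fun hs => h s hs, fun hs => hs ▸ Filter.univ_mem⟩
  · rintro rfl; exact top_indiscrete X

lemma unif_top_of_subsingleton {X : Type u} (uX : UniformSpace X) (h : Subsingleton X) :
    uX = ⊤ := by
  refine UniformSpace.ext ?_
  rw [top_uniformity]
  ext s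
  simp only [Filter.mem_top]
  refine ⟨fun hs => ?_, fun hs => hs ▸ Filter.univ_mem⟩
  apply Set.eq_univ_of_forall
  rintro ⟨a, b⟩
  have hab : a = b := Subsingleton.elim a b
  subst hab
  exact refl_mem_uniformity hs

lemma uc_of_subsingleton {X Y : Type u} (uX : UniformSpace X) (uY : UniformSpace Y)
    (h : Subsingleton X) (f : X → Y) : @UniformContinuous X Y uX uY f := by
  intro V hV
  rw [Filter.mem_map]
  have h2 : (fun x : X × X => (f x.1, f x.2)) ⁻¹' V = Set.univ := by
    apply Set.eq_univ_of_forall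
    rintro ⟨a, b⟩
    have hab : a = b := Subsingleton.elim a b
    subst hab
    show (f a, f a) ∈ V
    exact refl_mem_uniformity hV
  rw [h2]; exact Filter.univ_mem

lemma uc_top_tgt {X Y : Type u} (uX : UniformSpace X) (f : X → Y) :
    @UniformContinuous X Y uX ⊤ f := by
  intro V hV
  rw [top_uniformity, Filter.mem_top] at hV
  subst hV
  simp

lemma uc_of_indiscrete_tgt {X Y : Type u} (uX : UniformSpace X) (uY : UniformSpace Y)
    (h : IsIndiscreteUnif Y uY) (f : X → Y) : @UniformContinuous X Y uX uY f := by
  rw [(indiscrete_iff_eq_top uY).1 h]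
  exact uc_top_tgt uX f

lemma uc_of_discrete_src {X Y : Type u} (uY : UniformSpace Y) (f : X → Y) :
    @UniformContinuous X Y ⊥ uY f := by
  intro V hV
  rw [Filter.mem_map]
  refine Filter.mem_of_superset
    (show SetRel.id ∈ @uniformity X ⊥ from Filter.mem_principal_self _) ?_
  rintro ⟨a, b⟩ hab
  have : a = b := hab
  subst this
  show (f a, f a) ∈ V
  exact refl_mem_uniformity hV

lemma uc_to_discrete {X Y : Type u} (uX : UniformSpace X)
    (h : SetRel.id ∈ @uniformity X uX) (f : X → Y) : @UniformContinuous X Y uX ⊥ f := by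
  intro V hV
  have hV' : SetRel.id ⊆ V := Filter.mem_principal.1 (by rwa [bot_uniformity] at hV)
  rw [Filter.mem_map]
  refine Filter.mem_of_superset h ?_
  rintro ⟨a, b⟩ hab
  have : a = b := hab
  subst this
  exact hV' rfl

/-! ### category plumbing -/

variable {C : UnifClass.{u}}

@[reducible] def mkObj (X : Type u) (uX : UniformSpace X) (h : C X uX) : C.Cat := ⟨@UniformSpaceCat.of X uX, h⟩

def fn {A B : C.Cat} (f : A ⟶ B) : A.obj.carrier → B.obj.carrier := f.hom.hom'.val

lemma fn_uc {A B : C.Cat} (f : A ⟶ B) :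
    @UniformContinuous _ _ A.obj.str B.obj.str (fn f) := f.hom.hom'.property

def mkHom {A B : C.Cat} (g : A.obj.carrier → B.obj.carrier)
    (hg : @UniformContinuous _ _ A.obj.str B.obj.str g) : A ⟶ B := ⟨⟨⟨g, hg⟩⟩⟩

@[simp] lemma fn_mkHom {A B : C.Cat} (g : A.obj.carrier → B.obj.carrier) (hg) :
    fn (mkHom g hg) = g := rfl

lemma hom_ext' {A B : C.Cat} {f g : A ⟶ B} (h : fn f = fn g) : f = g :=
  ObjectProperty.hom_ext _ (UniformSpaceCat.Hom.ext (Subtype.ext h))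

@[simp] lemma fn_comp {A B D : C.Cat} (f : A ⟶ B) (g : B ⟶ D) :
    fn (f ≫ g) = fn g ∘ fn f := rfl

@[simp] lemma fn_id (A : C.Cat) : fn (𝟙 A) = id := rfl

@[simp] lemma U_map {A B : C.Cat} (f : A ⟶ B) : C.U.map f = TypeCat.ofHom (fn f) := rfl

@[simp] lemma U_obj (A : C.Cat) : C.U.obj A = A.obj.carrier := rfl


/-! ### coequalizers and regular epis -/

section CatLemmas
variable (hUC : ∀ (A B : C.Cat) (g : A.obj.carrier → B.obj.carrier),
    @UniformContinuous _ _ A.obj.str B.obj.str g)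
  (hquot : ∀ (B : C.Cat) (r : B.obj.carrier → B.obj.carrier → Prop), C (Quot r) ⊤)

def coeqRel {A B : C.Cat} (f g : A ⟶ B) : B.obj.carrier → B.obj.carrier → Prop :=
  fun b b' => ∃ a, fn f a = b ∧ fn g a = b'

def coeqObj {A B : C.Cat} (f g : A ⟶ B) : C.Cat :=
  mkObj (Quot (coeqRel f g)) ⊤ (hquot B _)

def coeqπ {A B : C.Cat} (f g : A ⟶ B) : B ⟶ coeqObj hquot f g :=
  mkHom (Quot.mk _) (hUC _ _ _)

lemma coeqw {A B : C.Cat} (f g : A ⟶ B) :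
    f ≫ coeqπ hUC hquot f g = g ≫ coeqπ hUC hquot f g :=
  hom_ext' (funext fun a => Quot.sound ⟨a, rfl, rfl⟩)

noncomputable def coeqIsColim {A B : C.Cat} (f g : A ⟶ B) :
    IsColimit (Cofork.ofπ (coeqπ hUC hquot f g) (coeqw hUC hquot f g)) :=
  Cofork.IsColimit.mk _
    (fun s => mkHom
      (Quot.lift (fn s.π) (by
        rintro b b' ⟨a, h1, h2⟩
        rw [← h1, ← h2]
        exact congrFun (congrArg fn s.condition) a))
      (hUC _ _ _))
    (fun s => hom_ext' rfl)
    (fun s m hm => hom_ext' (funext (fun q => by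
      induction q using Quot.ind with
      | _ b => exact congrFun (congrArg fn hm) b)))

noncomputable def hasCoeq : HasCoequalizers C.Cat :=
  @hasCoequalizers_of_hasColimit_parallelPair _ _
    (fun {A B f g} => HasColimit.mk ⟨_, coeqIsColim hUC hquot f g⟩)

noncomputable def regEpi_of_surj (hUC : ∀ (A B : C.Cat) (g : A.obj.carrier → B.obj.carrier),
      @UniformContinuous _ _ A.obj.str B.obj.str g) {A B : C.Cat} (f : A ⟶ B) (hsurj : Function.Surjective (fn f)) :
    RegularEpi f := by
  haveI : IsSplitEpi f := IsSplitEpi.mk'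
    ⟨mkHom (Function.surjInv hsurj) (hUC _ _ _),
     hom_ext' (funext fun b => Function.surjInv_eq hsurj b)⟩
  exact RegularEpi.ofSplitEpi f

end CatLemmas

noncomputable def typeRegularEpi {X Y : Type u} (f : X ⟶ Y) (h : Function.Surjective f) :
    RegularEpi f := by
  haveI : Epi f := (CategoryTheory.epi_iff_surjective f).2 h
  haveI := isSplitEpi_of_epi f
  exact RegularEpi.ofSplitEpi f

lemma surj_of_regEpi_sub (hs : ∀ (X : Type u) (uX : UniformSpace X), C X uX ↔ Subsingleton X)
    {A B : C.Cat} (f : A ⟶ B) (h : RegularEpi f) : Function.Surjective (fn f) := by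
  have hA : Subsingleton A.obj.carrier := (hs _ _).1 A.property
  have hlr : h.left = h.right := hom_ext' (funext fun w => Subsingleton.elim _ _)
  have hw : h.left ≫ 𝟙 A = h.right ≫ 𝟙 A := by rw [hlr]
  have hft : f ≫ Cofork.IsColimit.desc h.isColimit (𝟙 A) hw = 𝟙 A := by
    have := Cofork.IsColimit.π_desc' h.isColimit (𝟙 A) hw
    simpa using this
  haveI : RegularEpi f := h
  haveI : Epi f := RegularEpi.epi f h
  have htf : Cofork.IsColimit.desc h.isColimit (𝟙 A) hw ≫ f = 𝟙 B := by
    rw [← cancel_epi f, ← Category.assoc, hft]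
    simp
  intro b
  exact ⟨fn (Cofork.IsColimit.desc h.isColimit (𝟙 A) hw) b, congrFun (congrArg fn htf) b⟩

lemma surj_of_epi_ind (hs : ∀ (X : Type u) (uX : UniformSpace X), C X uX ↔ IsIndiscreteUnif X uX)
    {A B : C.Cat} (f : A ⟶ B) (hepi : Epi f) : Function.Surjective (fn f) := by
  classical
  by_contra hns
  simp only [Function.Surjective, not_forall, not_exists] at hns
  obtain ⟨b0, hb0⟩ := hns
  let X2 : C.Cat := mkObj (ULift.{u} Bool) ⊤ ((hs _ _).2 (top_indiscrete _))
  let k1 : B ⟶ X2 := mkHom (fun _ => ⟨true⟩) (uc_top_tgt _ _)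
  let k2 : B ⟶ X2 := mkHom (fun b => ⟨decide (∃ a, fn f a = b)⟩) (uc_top_tgt _ _)
  have hk : f ≫ k1 = f ≫ k2 := hom_ext' (funext fun a => by
    show (⟨true⟩ : ULift Bool) = ⟨decide (∃ a', fn f a' = fn f a)⟩
    congr 1
    exact (decide_eq_true ⟨a, rfl⟩).symm)
  have hkk : k1 = k2 := (cancel_epi f).1 hk
  have h0 := congrArg ULift.down (congrFun (congrArg fn hkk) b0)
  have : (∃ a, fn f a = b0) := of_decide_eq_true h0.symm
  obtain ⟨a, ha⟩ := this
  exact hb0 a ha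



abbrev FS (S : Type u) : Type u := ULift.{u} (PLift (Nonempty S))

noncomputable def Fsub (hs : ∀ (X : Type u) (uX : UniformSpace X), C X uX ↔ Subsingleton X) :
    Type u ⥤ C.Cat where
  obj S := mkObj (FS S) ⊤ ((hs _ _).2 inferInstance)
  map {S S'} u := mkHom (fun h => ⟨⟨Nonempty.map u h.down.down⟩⟩) (uc_top_tgt _ _)
  map_id := fun S => hom_ext' (funext fun x => @Subsingleton.elim (FS S) inferInstance _ _)
  map_comp := fun {S S' S''} f g =>
    hom_ext' (funext fun x => @Subsingleton.elim (FS S'') inferInstance _ _)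

noncomputable def adjSub (hs : ∀ (X : Type u) (uX : UniformSpace X), C X uX ↔ Subsingleton X) :
    Fsub (C := C) hs ⊣ C.U :=
  Adjunction.mkOfHomEquiv
  { homEquiv := fun S X =>
      { toFun := fun m => TypeCat.ofHom (fun s => fn m ⟨⟨⟨s⟩⟩⟩)
        invFun := fun k => mkHom (fun h => k h.down.down.some)
          (uc_of_subsingleton _ _ (inferInstanceAs (Subsingleton (FS S))) _)
        left_inv := fun m => hom_ext' (funext fun h =>
          congrArg (fn m) (@Subsingleton.elim (FS S) inferInstance _ _))
        right_inv := fun k => ConcreteCategory.hom_ext _ _ fun s =>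
          @Subsingleton.elim _ ((hs X.obj.carrier X.obj.str).1 X.property) _ _ }
    homEquiv_naturality_left_symm := fun {S' S X} f g =>
      hom_ext' (funext fun x =>
        @Subsingleton.elim _ ((hs X.obj.carrier X.obj.str).1 X.property) _ _)
    homEquiv_naturality_right := fun {S X X'} f g =>
      ConcreteCategory.hom_ext _ _ fun s =>
        @Subsingleton.elim _ ((hs X'.obj.carrier X'.obj.str).1 X'.property) _ _ }

lemma algebraic_sub (hs : ∀ (X : Type u) (uX : UniformSpace X), C X uX ↔ Subsingleton X) :
    AlgebraicConcreteCategory C.U := by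
  have hUC : ∀ (A B : C.Cat) (g : A.obj.carrier → B.obj.carrier),
      @UniformContinuous _ _ A.obj.str B.obj.str g :=
    fun A B g => uc_of_subsingleton _ _ ((hs _ _).1 A.property) g
  have hquot : ∀ (B : C.Cat) (r : B.obj.carrier → B.obj.carrier → Prop), C (Quot r) ⊤ := fun B r => by
    haveI : Subsingleton B.obj.carrier := (hs _ _).1 B.property
    exact (hs _ _).2 (Quot.Subsingleton)
  refine ⟨hasCoeq hUC hquot, ⟨⟨Fsub hs, ⟨adjSub hs⟩⟩⟩, ?_, ?_⟩
  · rintro A B f ⟨h⟩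
    exact ⟨typeRegularEpi (C.U.map f) (surj_of_regEpi_sub hs f h)⟩
  · rintro A B f ⟨h⟩
    haveI := h
    have hepi : Epi (C.U.map f) := RegularEpi.epi _ h
    exact ⟨regEpi_of_surj hUC f ((CategoryTheory.epi_iff_surjective (C.U.map f)).1 hepi)⟩

noncomputable def Find
    (hi : ∀ (X : Type u) (uX : UniformSpace X), C X uX ↔ IsIndiscreteUnif X uX) :
    Type u ⥤ C.Cat where
  obj S := mkObj S ⊤ ((hi _ _).2 (top_indiscrete _))
  map {S S'} u := mkHom u (uc_top_tgt _ _)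
  map_id := fun S => hom_ext' rfl
  map_comp := fun f g => hom_ext' rfl

noncomputable def adjInd
    (hi : ∀ (X : Type u) (uX : UniformSpace X), C X uX ↔ IsIndiscreteUnif X uX) :
    Find (C := C) hi ⊣ C.U :=
  Adjunction.mkOfHomEquiv
  { homEquiv := fun S X =>
      { toFun := fun m => TypeCat.ofHom (fn m)
        invFun := fun k => mkHom k (uc_of_indiscrete_tgt _ _ ((hi _ _).1 X.property) k)
        left_inv := fun m => hom_ext' rfl
        right_inv := fun k => rfl }
    homEquiv_naturality_left_symm := fun f g => hom_ext' rfl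
    homEquiv_naturality_right := fun f g => rfl }

lemma algebraic_ind
    (hi : ∀ (X : Type u) (uX : UniformSpace X), C X uX ↔ IsIndiscreteUnif X uX) :
    AlgebraicConcreteCategory C.U := by
  have hUC : ∀ (A B : C.Cat) (g : A.obj.carrier → B.obj.carrier),
      @UniformContinuous _ _ A.obj.str B.obj.str g :=
    fun A B g => uc_of_indiscrete_tgt _ _ ((hi _ _).1 B.property) g
  have hquot : ∀ (B : C.Cat) (r : B.obj.carrier → B.obj.carrier → Prop), C (Quot r) ⊤ :=
    fun B r => (hi _ _).2 (top_indiscrete _)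
  refine ⟨hasCoeq hUC hquot, ⟨⟨Find hi, ⟨adjInd hi⟩⟩⟩, ?_, ?_⟩
  · rintro A B f ⟨h⟩
    haveI := h
    have hepi : Epi f := RegularEpi.epi f h
    exact ⟨typeRegularEpi (C.U.map f) (surj_of_epi_ind hi f hepi)⟩
  · rintro A B f ⟨h⟩
    haveI := h
    have hepi : Epi (C.U.map f) := RegularEpi.epi _ h
    exact ⟨regEpi_of_surj hUC f ((CategoryTheory.epi_iff_surjective (C.U.map f)).1 hepi)⟩


/-! ### forward direction helpers -/

lemma pi_unif_top {ι : Type u} (Xf : ι → Type u) (t : ∀ i, UniformSpace (Xf i))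
    (h : ∀ i, @uniformity _ (t i) = ⊤) :
    @uniformity _ (@Pi.uniformSpace ι Xf t) = ⊤ := by
  letI := t
  rw [Pi.uniformity]
  simp only [h, Filter.comap_top, iInf_top]

lemma mem_of_subsingleton (hprod : UnifClass.ClosedUnderProducts C)
    (hsub : UnifClass.ClosedUnderSubspaces C)
    {Y : Type u} (uY : UniformSpace Y) (h : Subsingleton Y) : C Y uY := by
  have hP : C (PEmpty.{u+1} → PUnit.{u+1})
      (@Pi.uniformSpace PEmpty (fun _ => PUnit.{u+1}) (fun _ => ⊥)) :=
    hprod PEmpty (fun _ => PUnit) (fun _ => ⊥) (fun i => i.elim)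
  refine hsub _ Y (@Pi.uniformSpace PEmpty (fun _ => PUnit.{u+1}) (fun _ => ⊥)) uY hP
    ⟨fun _ _ => PUnit.unit, ⟨⟨?_⟩, fun a b _ => Subsingleton.elim a b⟩⟩
  have h1 : @uniformity Y uY = ⊤ := by
    rw [unif_top_of_subsingleton uY h]; rfl
  have h2 : @uniformity (PEmpty.{u+1} → PUnit.{u+1})
      (@Pi.uniformSpace PEmpty (fun _ => PUnit.{u+1}) (fun _ => ⊥)) = ⊤ := by
    letI : ∀ _ : PEmpty.{u+1}, UniformSpace PUnit.{u+1} := fun _ => ⊥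
    rw [Pi.uniformity]
    exact iInf_of_empty _
  rw [h1, h2, Filter.comap_top]

lemma mem_of_indiscrete (hprod : UnifClass.ClosedUnderProducts C)
    (hsub : UnifClass.ClosedUnderSubspaces C)
    (h2 : ∀ (X : Type u) (uX : UniformSpace X), C X uX → IsIndiscreteUnif X uX)
    (X0 : Type u) (u0 : UniformSpace X0) (h0 : C X0 u0) (a b : X0) (hab : a ≠ b)
    {Y : Type u} (uY : UniformSpace Y) (hY : IsIndiscreteUnif Y uY) : C Y uY := by
  classical
  letI := u0
  set I2 := {x : X0 // x = a ∨ x = b} with hI2def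
  have hI2 : C I2 _ := hsub X0 I2 u0 _ h0 ⟨Subtype.val, isUniformEmbedding_subtype_val⟩
  have hPi : C (Y → I2) (Pi.uniformSpace _) :=
    hprod Y (fun _ => I2) (fun _ => _) (fun _ => hI2)
  have hI2top : @uniformity I2 _ = ⊤ := by
    have := (indiscrete_iff_eq_top (X := I2) _).1 (h2 I2 _ hI2)
    rw [this]; rfl
  refine hsub _ Y _ uY hPi
    ⟨fun x y => if y = x then ⟨a, Or.inl rfl⟩ else ⟨b, Or.inr rfl⟩, ⟨⟨?_⟩, ?_⟩⟩
  · have hPitop : @uniformity (Y → I2) (Pi.uniformSpace _) = ⊤ :=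
      pi_unif_top _ _ (fun _ => hI2top)
    have hYtop : @uniformity Y uY = ⊤ := by
      rw [(indiscrete_iff_eq_top uY).1 hY]; rfl
    rw [hPitop, hYtop, Filter.comap_top]
  · intro x x' hxx
    by_contra hne
    have h3 : (if x = x then (⟨a, Or.inl rfl⟩ : I2) else ⟨b, Or.inr rfl⟩) =
        (if x = x' then (⟨a, Or.inl rfl⟩ : I2) else ⟨b, Or.inr rfl⟩) := congrFun hxx x
    rw [if_pos rfl, if_neg hne] at h3
    exact hab (congrArg Subtype.val h3)


lemma not_algebraic_contra (hsub : UnifClass.ClosedUnderSubspaces C)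
    (hprod : UnifClass.ClosedUnderProducts C)
    (hrefl : ∀ (A B : C.Cat) (f : A ⟶ B),
      Nonempty (RegularEpi (C.U.map f)) → Nonempty (RegularEpi f))
    (X1 : Type u) (u1 : UniformSpace X1) (h1 : C X1 u1)
    (hni : ¬ IsIndiscreteUnif X1 u1) : False := by
  classical
  letI := u1
  simp only [IsIndiscreteUnif, not_forall] at hni
  obtain ⟨V, hV, hVne⟩ := hni
  obtain ⟨⟨c, d⟩, hp⟩ := (Set.ne_univ_iff_exists_notMem V).1 hVne
  have hcd : c ≠ d := by rintro rfl; exact hp (refl_mem_uniformity hV)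
  obtain ⟨W, hW, hWs, hWV⟩ := symm_of_uniformity hV
  have hWc : (c, d) ∉ W := fun h => hp (hWV h)
  have hWd : (d, c) ∉ W := fun h => hp (hWV (hWs.symm _ _ h))
  -- the two-point subspace is discrete
  have hI2C : C {x : X1 // x = c ∨ x = d} instUniformSpaceSubtype :=
    hsub X1 _ u1 _ h1 ⟨Subtype.val, isUniformEmbedding_subtype_val⟩
  have hid : SetRel.id ∈ 𝓤 {x : X1 // x = c ∨ x = d} := by
    rw [uniformity_subtype]
    refine Filter.mem_comap.2 ⟨W, hW, ?_⟩
    rintro ⟨x, y⟩ hxy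
    show x = y
    have hxy' : (x.val, y.val) ∈ W := hxy
    rcases x.2 with hx | hx <;> rcases y.2 with hy | hy
    · exact Subtype.ext (hx.trans hy.symm)
    · exact absurd (by rwa [hx, hy] at hxy') hWc
    · exact absurd (by rwa [hx, hy] at hxy') hWd
    · exact Subtype.ext (hx.trans hy.symm)
  -- two comparable, distinct uniformities on `ULift ℕ`, both in `C`
  let T := ULift.{u} ℕ
  let I2 := {x : X1 // x = c ∨ x = d}
  let cc : I2 := ⟨c, Or.inl rfl⟩
  let dd : I2 := ⟨d, Or.inr rfl⟩
  let e1 : T → (Set T → I2) := fun x S => if x ∈ S then cc else dd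
  let r : (Set T → I2) → (T → I2) := fun g y => g {y}
  let e2 : T → (T → I2) := fun x => r (e1 x)
  let uA : UniformSpace T := UniformSpace.comap e1 (Pi.uniformSpace _)
  let uB : UniformSpace T := UniformSpace.comap e2 (Pi.uniformSpace _)
  have hccdd : cc ≠ dd := fun h => hcd (congrArg Subtype.val h)
  have hPi1C : C (Set T → I2) (Pi.uniformSpace _) :=
    hprod (Set T) (fun _ => I2) (fun _ => instUniformSpaceSubtype) (fun _ => hI2C)
  have hPi2C : C (T → I2) (Pi.uniformSpace _) :=
    hprod T (fun _ => I2) (fun _ => instUniformSpaceSubtype) (fun _ => hI2C)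
  have hinj1 : Function.Injective e1 := by
    intro x x' h
    have h3 : e1 x {x} = e1 x' {x} := congrFun h {x}
    by_contra hne
    have hxx : e1 x {x} = cc := if_pos (Set.mem_singleton x)
    have hx'x : e1 x' {x} = dd :=
      if_neg (fun hmem => hne ((Set.mem_singleton_iff.1 hmem).symm))
    rw [hxx, hx'x] at h3
    exact hccdd h3
  have hinj2 : Function.Injective e2 := by
    intro x x' h
    have h3 : e2 x x = e2 x' x := congrFun h x
    by_contra hne
    have hxx : e2 x x = cc := if_pos (Set.mem_singleton x)
    have hx'x : e2 x' x = dd :=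
      if_neg (fun hmem => hne ((Set.mem_singleton_iff.1 hmem).symm))
    rw [hxx, hx'x] at h3
    exact hccdd h3
  have hAC : C T uA := hsub _ T _ uA hPi1C
    ⟨e1, @IsUniformEmbedding.mk T (Set T → I2) uA (Pi.uniformSpace _) e1
      (@IsUniformInducing.mk T (Set T → I2) uA (Pi.uniformSpace _) e1
        (@uniformity_comap T (Set T → I2) (Pi.uniformSpace _) e1).symm) hinj1⟩
  have hBC : C T uB := hsub _ T _ uB hPi2C
    ⟨e2, @IsUniformEmbedding.mk T (T → I2) uB (Pi.uniformSpace _) e2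
      (@IsUniformInducing.mk T (T → I2) uB (Pi.uniformSpace _) e2
        (@uniformity_comap T (T → I2) (Pi.uniformSpace _) e2).symm) hinj2⟩
  -- id : (T, uA) → (T, uB) is uniformly continuous
  have hruc : @UniformContinuous _ _ (Pi.uniformSpace _) (Pi.uniformSpace _) r :=
    uniformContinuous_pi.2 fun y => Pi.uniformContinuous_proj (fun _ : Set T => I2) {y}
  have hle : 𝓤[uA] ≤ 𝓤[uB] := by
    have h4 : 𝓤 (Set T → I2) ≤ Filter.comap (Prod.map r r) (𝓤 (T → I2)) :=
      Filter.tendsto_iff_comap.1 hruc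
    calc 𝓤[uA] = Filter.comap (Prod.map e1 e1) (𝓤 (Set T → I2)) := rfl
      _ ≤ Filter.comap (Prod.map e1 e1)
          (Filter.comap (Prod.map r r) (𝓤 (T → I2))) := Filter.comap_mono h4
      _ = Filter.comap (Prod.map e2 e2) (𝓤 (T → I2)) := by
          rw [Filter.comap_comap]
          exact congrArg (fun m => Filter.comap m (𝓤 (T → I2)))
            (rfl : Prod.map r r ∘ Prod.map e1 e1 = Prod.map e2 e2)
      _ = 𝓤[uB] := rfl
  have hABuc : @UniformContinuous T T uA uB (fun x => x) := by
    show Filter.map (fun p : T × T => (p.1, p.2)) 𝓤[uA] ≤ 𝓤[uB]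
    rw [show (fun p : T × T => (p.1, p.2)) = id from rfl, Filter.map_id]
    exact hle
  -- a set in 𝓤[uA] that is not in 𝓤[uB]
  let Ev : Set T := {z : T | Even z.down}
  let V' : Set (T × T) := {p : T × T | Even p.1.down ↔ Even p.2.down}
  have hVA : V' ∈ 𝓤[uA] := by
    show V' ∈ Filter.comap (Prod.map e1 e1) (𝓤 (Set T → I2))
    refine Filter.mem_comap.2
      ⟨(fun q : (Set T → I2) × (Set T → I2) => (q.1 Ev, q.2 Ev)) ⁻¹' SetRel.id, ?_, ?_⟩
    · rw [Pi.uniformity]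
      exact Filter.mem_iInf_of_mem Ev (Filter.preimage_mem_comap hid)
    · rintro ⟨x, y⟩ hxy
      have hxy' : e1 x Ev = e1 y Ev := hxy
      show Even x.down ↔ Even y.down
      by_cases hx : x ∈ Ev <;> by_cases hy : y ∈ Ev
      · exact iff_of_true hx hy
      · exfalso
        rw [show e1 x Ev = cc from if_pos hx, show e1 y Ev = dd from if_neg hy] at hxy'
        exact hccdd hxy'
      · exfalso
        rw [show e1 x Ev = dd from if_neg hx, show e1 y Ev = cc from if_pos hy] at hxy'
        exact hccdd hxy'.symm
      · exact iff_of_false hx hy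
  have hVB : V' ∉ 𝓤[uB] := by
    intro hmem
    have hmem' : V' ∈ Filter.comap (Prod.map e2 e2) (𝓤 (T → I2)) := hmem
    obtain ⟨W2, hW2, hW2sub⟩ := Filter.mem_comap.1 hmem'
    rw [Pi.uniformity, Filter.mem_iInf] at hW2
    obtain ⟨I, hIfin, Vs, hVs, rfl⟩ := hW2
    obtain ⟨n, hn⟩ := (hIfin.image (fun z => z.down)).bddAbove
    have key : ∀ z : T, (∀ i ∈ I, z ≠ i) → ∀ z' : T, (∀ i ∈ I, z' ≠ i) →
        (z, z') ∈ V' := by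
      intro z hz z' hz'
      refine hW2sub (Set.mem_preimage.2 ?_)
      refine Set.mem_iInter.2 fun i => ?_
      obtain ⟨t, ht, hts⟩ := Filter.mem_comap.1 (hVs i)
      apply hts
      show (e2 z i.1, e2 z' i.1) ∈ t
      have hze : e2 z i.1 = dd :=
        if_neg (fun hmem2 => hz i.1 i.2 (Set.mem_singleton_iff.1 hmem2))
      have hz'e : e2 z' i.1 = dd :=
        if_neg (fun hmem2 => hz' i.1 i.2 (Set.mem_singleton_iff.1 hmem2))
      rw [hze, hz'e]
      exact refl_mem_uniformity ht
    have hbound : ∀ i ∈ I, ULift.down i ≤ n := fun i hi =>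
      hn (Set.mem_image_of_mem _ hi)
    have hx : ∀ i ∈ I, (⟨2 * n + 2⟩ : T) ≠ i := by
      intro i hi h
      have h5 : ULift.down i ≤ n := hbound i hi
      have h6 : (2 * n + 2 : ℕ) = ULift.down i := congrArg ULift.down h
      omega
    have hy : ∀ i ∈ I, (⟨2 * n + 1⟩ : T) ≠ i := by
      intro i hi h
      have h5 : ULift.down i ≤ n := hbound i hi
      have h6 : (2 * n + 1 : ℕ) = ULift.down i := congrArg ULift.down h
      omega
    have hxyV : Even (2 * n + 2) ↔ Even (2 * n + 1) :=
      key ⟨2 * n + 2⟩ hx ⟨2 * n + 1⟩ hy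
    have he : Even (2 * n + 2) := ⟨n + 1, by omega⟩
    obtain ⟨k, hk⟩ := hxyV.1 he
    omega
  -- assemble the contradiction
  let objA : C.Cat := mkObj T uA hAC
  let objB : C.Cat := mkObj T uB hBC
  let f : objA ⟶ objB := mkHom (fun x => x) hABuc
  obtain ⟨h⟩ := hrefl objA objB f ⟨typeRegularEpi (C.U.map f) (fun b => ⟨b, rfl⟩)⟩
  have hlr : h.left = h.right :=
    hom_ext' (funext fun w => congrFun (congrArg fn h.w) w)
  have hw2 : h.left ≫ 𝟙 objA = h.right ≫ 𝟙 objA := by rw [hlr]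
  have hft : f ≫ Cofork.IsColimit.desc h.isColimit (𝟙 objA) hw2 = 𝟙 objA := by
    have := Cofork.IsColimit.π_desc' h.isColimit (𝟙 objA) hw2
    simpa using this
  have ht : fn (Cofork.IsColimit.desc h.isColimit (𝟙 objA) hw2) = (fun x : T => x) :=
    congrArg fn hft
  have hcont := fn_uc (Cofork.IsColimit.desc h.isColimit (𝟙 objA) hw2)
  rw [ht] at hcont
  have : V' ∈ 𝓤[uB] := by
    have h7 := hcont hVA
    have h8 : V' ∈ Filter.map (id : T × T → T × T) 𝓤[uB] := h7
    rwa [Filter.map_id] at h8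
  exact hVB this

end EpiRefAux

theorem epireflective_algebraic_Unif
    (C : UnifClass.{u}) (hiso : C.IsoClosed)
    (hprod : C.ClosedUnderProducts) (hsub : C.ClosedUnderSubspaces) :
    AlgebraicConcreteCategory C.U ↔
      ((∀ (X : Type u) (uX : UniformSpace X), C X uX ↔ Subsingleton X) ∨
       (∀ (X : Type u) (uX : UniformSpace X), C X uX ↔ IsIndiscreteUnif X uX)) := by
  constructor
  · rintro ⟨hco, hadj, hpres, hrefl⟩
    by_cases h2 : ∀ (X : Type u) (uX : UniformSpace X), C X uX → IsIndiscreteUnif X uX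
    · by_cases h1 : ∀ (X : Type u) (uX : UniformSpace X), C X uX → Subsingleton X
      · left
        intro X uX
        exact ⟨h1 X uX, fun h => EpiRefAux.mem_of_subsingleton hprod hsub uX h⟩
      · right
        push_neg at h1
        obtain ⟨X0, u0, h0C, h0ns⟩ := h1
        have hnt : Nontrivial X0 := h0ns
        obtain ⟨a, b, hab⟩ := exists_pair_ne X0
        intro X uX
        exact ⟨h2 X uX,
          fun h => EpiRefAux.mem_of_indiscrete hprod hsub h2 X0 u0 h0C a b hab uX h⟩
    · exfalso
      push_neg at h2
      obtain ⟨X1, u1, h1C, h1ni⟩ := h2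
      exact EpiRefAux.not_algebraic_contra hsub hprod hrefl X1 u1 h1C h1ni
  · rintro (hs | hi)
    · exact EpiRefAux.algebraic_sub hs
    · exact EpiRefAux.algebraic_ind hi
end

section
/- Let C be an isomorphism-closed class of uniform spaces each of which is indiscrete, and suppose C is algebraic, i.e. the full subcategory C of uniform spaces has coequalizers, its underlying-set functor U : C → Set has a left adjoint, and U preserves and reflects regular epimorphisms. Then C is the class of all one-point uniform spaces, or the class of all uniform spaces with at most one point, or the class of all indiscrete uniform spaces. -/
universe u

open Uniformity CategoryTheory CategoryTheory.Limits

/-- An indiscrete uniform structure equals `⊤`. -/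
lemma IsIndiscreteUnif.eq_top {X : Type u} {uX : UniformSpace X}
    (h : IsIndiscreteUnif X uX) : uX = ⊤ := by
  refine UniformSpace.ext (Filter.ext fun s => ?_)
  rw [top_uniformity, Filter.mem_top]
  exact ⟨h s, fun hs => hs ▸ Filter.univ_mem⟩

lemma isIndiscreteUnif_top (X : Type u) : IsIndiscreteUnif X (⊤ : UniformSpace X) := by
  intro V hV
  rw [top_uniformity, Filter.mem_top] at hV
  exact hV

/-- Every uniform structure on a subsingleton is indiscrete. -/
lemma isIndiscreteUnif_of_subsingleton (X : Type u) (hs : Subsingleton X)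
    (uX : UniformSpace X) : IsIndiscreteUnif X uX := by
  intro V hV
  have h1 : V ∈ Filter.principal (SetRel.id : Set (X × X)) :=
    Filter.le_def.mp (@refl_le_uniformity X uX) V hV
  rw [Filter.mem_principal] at h1
  refine Set.eq_univ_iff_forall.mpr fun p => h1 ?_
  have := hs.elim p.1 p.2
  simp [SetRel.id, this]

/-- Any equiv between types with the indiscrete uniformity is a uniform equiv. -/
noncomputable def Equiv.toTopUniformEquiv {X Y : Type u} (e : X ≃ Y) :
    @UniformEquiv X Y ⊤ ⊤ := by
  letI : UniformSpace X := ⊤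
  letI : UniformSpace Y := ⊤
  exact { e with
    uniformContinuous_toFun := le_top (a := Filter.map _ _)
    uniformContinuous_invFun := le_top (a := Filter.map _ _) }

theorem algebraic_class_of_indiscrete_Unif
    (C : UnifClass.{u}) (hiso : C.IsoClosed)
    (hind : ∀ (X : Type u) (uX : UniformSpace X), C X uX → IsIndiscreteUnif X uX)
    (halg : AlgebraicConcreteCategory C.U) :
    (∀ (X : Type u) (uX : UniformSpace X), C X uX ↔ (Nonempty X ∧ Subsingleton X)) ∨
    (∀ (X : Type u) (uX : UniformSpace X), C X uX ↔ Subsingleton X) ∨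
    (∀ (X : Type u) (uX : UniformSpace X), C X uX ↔ IsIndiscreteUnif X uX) := by
  classical
  obtain ⟨hcoeq, hradj, hpres, -⟩ := halg
  -- membership depends only on the `⊤` structure
  have hmem : ∀ (X : Type u) (uX : UniformSpace X), C X uX ↔ (uX = ⊤ ∧ C X ⊤) := by
    intro X uX
    constructor
    · intro h
      have ht : uX = ⊤ := (hind X uX h).eq_top
      exact ⟨ht, ht ▸ h⟩
    · rintro ⟨ht, h⟩
      exact ht ▸ h
  -- `C _ ⊤` is closed under equivs
  have hS : ∀ {X Y : Type u}, C X ⊤ → (X ≃ Y) → C Y ⊤ := by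
    intro X Y h e
    exact hiso X Y ⊤ ⊤ h ⟨e.toTopUniformEquiv⟩
  -- every object of the category has `C _ ⊤` on its carrier
  have hobjS : ∀ A : C.Cat, C A.obj.carrier ⊤ := fun A => ((hmem _ _).mp A.property).2
  -- every function between carriers of objects is a morphism
  have hBind : ∀ (A : C.Cat), IsIndiscreteUnif A.obj.carrier A.obj.str :=
    fun A => hind _ _ A.property
  let homMk : ∀ (A B : C.Cat) (f : A.obj.carrier → B.obj.carrier), A ⟶ B := fun A B f =>
    ⟨⟨⟨f, by
      intro s hs
      have : s = Set.univ := hBind B s hs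
      subst this
      exact Filter.univ_mem⟩⟩⟩
  have hUhom : ∀ (A B : C.Cat) (f : A.obj.carrier → B.obj.carrier), C.U.map (homMk A B f) = TypeCat.ofHom f :=
    fun _ _ _ => rfl
  obtain ⟨F, ⟨adj⟩⟩ := hradj.exists_leftAdjoint
  by_cases hbig : ∃ (X0 : Type u) (a b : X0), C X0 ⊤ ∧ a ≠ b
  · -- there is a member with at least two points: C is the class of indiscrete spaces
    obtain ⟨X0, xa, xb, hX0, hxab⟩ := hbig
    let A0 : C.Cat := ⟨@UniformSpaceCat.of X0 ⊤, hX0⟩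
    -- the unit of the adjunction is injective
    have hη : ∀ (X : Type u) (x y : X), adj.unit.app X x = adj.unit.app X y → x = y := by
      intro X x y h
      by_contra hxy
      let g : X ⟶ C.U.obj A0 := TypeCat.ofHom fun z => if z = x then xa else xb
      let gbar : F.obj X ⟶ A0 := (adj.homEquiv X A0).symm g
      have h1 : adj.unit.app X ≫ C.U.map gbar = g :=
        (adj.homEquiv X A0).apply_symm_apply g
      have hx := ConcreteCategory.congr_hom h1 x
      have hy := ConcreteCategory.congr_hom h1 y
      simp only [types_comp_apply] at hx hy
      rw [h] at hx
      rw [hx] at hy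
      simp only [g, TypeCat.ofHom_apply, if_pos rfl, if_neg (Ne.symm hxy), ↓reduceIte] at hy
      exact hxab (hy.trans (if_neg (Ne.symm hxy)))
    -- quotient of a member carrier is a member carrier
    have quot : ∀ (A : C.Cat) (K : Type u) (q : A.obj.carrier → K),
        Function.Surjective q → C K ⊤ := by
      intro A K q hq
      let R : Type u := {p : A.obj.carrier × A.obj.carrier // q p.1 = q p.2}
      let p1 : R ⟶ C.U.obj A := TypeCat.ofHom fun r => r.1.1
      let p2 : R ⟶ C.U.obj A := TypeCat.ofHom fun r => r.1.2
      let f1 : F.obj R ⟶ A := (adj.homEquiv R A).symm p1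
      let f2 : F.obj R ⟶ A := (adj.homEquiv R A).symm p2
      let Q := coequalizer f1 f2
      let c : A ⟶ Q := coequalizer.π f1 f2
      have hre : Nonempty (RegularEpi (C.U.map c)) := hpres _ _ c ⟨IsRegularEpi.getStruct c⟩
      have hsurj : Function.Surjective (C.U.map c) := by
        obtain ⟨re⟩ := hre
        exact (epi_iff_surjective (C.U.map c)).mp (RegularEpi.epi _ re)
      -- `U.map c` coequalizes `p1` and `p2`
      have hco : ∀ r : R, C.U.map c (p1 r) = C.U.map c (p2 r) := by
        have h1 : f1 ≫ c = f2 ≫ c := coequalizer.condition f1 f2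
        have h2 : adj.homEquiv R Q (f1 ≫ c) = adj.homEquiv R Q (f2 ≫ c) := by rw [h1]
        rw [Adjunction.homEquiv_naturality_right, Adjunction.homEquiv_naturality_right,
          Equiv.apply_symm_apply, Equiv.apply_symm_apply] at h2
        intro r
        have := ConcreteCategory.congr_hom h2 r
        simpa only [types_comp_apply] using this
      have h1 : ∀ a b, q a = q b → C.U.map c a = C.U.map c b := fun a b h =>
        hco ⟨(a, b), h⟩
      have h2 : ∀ a b, C.U.map c a = C.U.map c b → q a = q b := by
        intro a b h
        by_contra hab
        let s : K → X0 := fun k => if k = q a then xa else xb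
        let g : A ⟶ A0 := homMk A A0 (fun z => s (q z))
        have hg : f1 ≫ g = f2 ≫ g := by
          apply (adj.homEquiv R A0).injective
          rw [Adjunction.homEquiv_naturality_right, Adjunction.homEquiv_naturality_right,
            Equiv.apply_symm_apply, Equiv.apply_symm_apply]
          ext r
          show s (q r.1.1) = s (q r.1.2)
          rw [r.2]
        have hcd : c ≫ coequalizer.desc g hg = g := coequalizer.π_desc g hg
        have hgab : C.U.map g a = C.U.map g b := by
          rw [← hcd, C.U.map_comp]
          simp only [types_comp_apply]
          rw [h]
        have hge : C.U.map g = TypeCat.ofHom fun z => s (q z) := rfl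
        rw [hge] at hgab
        have hgab' : s (q a) = s (q b) := hgab
        have hsa : s (q a) = xa := if_pos rfl
        have hsb : s (q b) = xb := if_neg (fun hh => hab hh.symm)
        rw [hsa, hsb] at hgab'
        exact hxab hgab'
      -- build the bijection `K ≃ U.obj Q`
      let t : K → C.U.obj Q := fun k => C.U.map c (Classical.choose (hq k))
      have htq : ∀ z, t (q z) = C.U.map c z := fun z =>
        h1 _ _ (Classical.choose_spec (hq (q z)))
      have tinj : Function.Injective t := by
        intro k1 k2 hk
        have e1 := Classical.choose_spec (hq k1)
        have e2 := Classical.choose_spec (hq k2)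
        rw [← e1, ← e2]
        exact h2 _ _ hk
      have tsurj : Function.Surjective t := by
        intro z
        obtain ⟨a, ha⟩ := hsurj z
        exact ⟨q a, (htq a).trans ha⟩
      exact hS (hobjS Q) (Equiv.ofBijective t ⟨tinj, tsurj⟩).symm
    -- every type carries a member structure
    have allS : ∀ K : Type u, C K ⊤ := by
      intro K
      by_cases hK : Nonempty K
      · obtain ⟨k0⟩ := hK
        let q : C.U.obj (F.obj K) → K := fun y =>
          if h : ∃ k, adj.unit.app K k = y then Classical.choose h else k0
        have hq : Function.Surjective q := by
          intro k
          refine ⟨adj.unit.app K k, ?_⟩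
          have hex : ∃ k', adj.unit.app K k' = adj.unit.app K k := ⟨k, rfl⟩
          show (if h : ∃ k', adj.unit.app K k' = adj.unit.app K k then
            Classical.choose h else k0) = k
          rw [dif_pos hex]
          exact hη K _ _ (Classical.choose_spec hex)
        exact quot (F.obj K) K q hq
      · have hKe : IsEmpty K := not_nonempty_iff.mp hK
        have hUe : IsEmpty (C.U.obj (F.obj K)) := by
          by_contra hne
          obtain ⟨y⟩ := not_isEmpty_iff.mp hne
          let m1 : F.obj K ⟶ A0 := homMk (F.obj K) A0 (fun _ => xa)
          let m2 : F.obj K ⟶ A0 := homMk (F.obj K) A0 (fun _ => xb)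
          have hm : m1 = m2 := by
            apply (adj.homEquiv K A0).injective
            ext k
            exact hKe.elim k
          have hcon : xa = xb := ConcreteCategory.congr_hom (congrArg C.U.map hm) y
          exact hxab hcon
        exact hS (hobjS (F.obj K)) (@Equiv.equivOfIsEmpty _ _ hUe hKe)
    right; right
    intro X uX
    constructor
    · exact hind X uX
    · intro h
      exact (hmem X uX).mpr ⟨h.eq_top, allS X⟩
  · -- all members are subsingletons
    have hss : ∀ X : Type u, C X ⊤ → Subsingleton X := fun X h =>
      ⟨fun a b => by by_contra hab; exact hbig ⟨X, a, b, h, hab⟩⟩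
    have hsingS : C (C.U.obj (F.obj PUnit)) ⊤ := hobjS _
    have hne : Nonempty (C.U.obj (F.obj PUnit)) := ⟨adj.unit.app PUnit PUnit.unit⟩
    have hsub := hss _ hsingS
    have hone : ∀ (X : Type u), Nonempty X → Subsingleton X → C X ⊤ := by
      intro X hn hsX
      exact hS hsingS (@equivOfSubsingletonOfSubsingleton _ _ hsub hsX
        (fun _ => hn.some) (fun _ => hne.some))
    have hSubTop : ∀ (X : Type u) (uX : UniformSpace X), Subsingleton X → uX = ⊤ :=
      fun X uX hsX => (isIndiscreteUnif_of_subsingleton X hsX uX).eq_top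
    by_cases hemp : ∃ X : Type u, IsEmpty X ∧ C X ⊤
    · right; left
      intro X uX
      constructor
      · intro h
        exact hss X ((hmem X uX).mp h).2
      · intro hsX
        refine (hmem X uX).mpr ⟨hSubTop X uX hsX, ?_⟩
        by_cases hn : Nonempty X
        · exact hone X hn hsX
        · obtain ⟨X', hX'e, hX'⟩ := hemp
          haveI := hX'e
          haveI := not_nonempty_iff.mp hn
          exact hS hX' (Equiv.equivOfIsEmpty X' X)
    · left
      intro X uX
      constructor
      · intro h
        have hS' := ((hmem X uX).mp h).2
        refine ⟨?_, hss X hS'⟩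
        by_contra hn
        exact hemp ⟨X, not_nonempty_iff.mp hn, hS'⟩
      · rintro ⟨hn, hsX⟩
        exact (hmem X uX).mpr ⟨hSubTop X uX hsX, hone X hn hsX⟩
end

section
/- Let C be an isomorphism-closed class of separated uniform spaces that is closed under products, closed under closed subspaces, and closed under uniformly continuous surjective images. If C contains a space with at least two points, then every compact separated uniform space belongs to C. -/
universe u

open Uniformity

/-- `C` is closed under uniformly continuous surjective images landing in
separated uniform spaces. -/
def UnifClass.ClosedUnderSurjectiveImages (C : UnifClass.{u}) : Prop :=
  ∀ (X Y : Type u) (uX : UniformSpace X) (uY : UniformSpace Y),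
    C X uX → IsSeparatedUnif Y uY →
    (∃ f : X → Y, @UniformContinuous X Y uX uY f ∧ Function.Surjective f) → C Y uY

theorem compact_mem_of_nontrivial_T2Unif
    (C : UnifClass.{u}) (hiso : C.IsoClosed)
    (hsep : ∀ (X : Type u) (uX : UniformSpace X), C X uX → IsSeparatedUnif X uX)
    (hprod : C.ClosedUnderProducts) (hclsub : C.ClosedUnderClosedSubspaces)
    (hsurj : C.ClosedUnderSurjectiveImages)
    (X₀ : Type u) (uX₀ : UniformSpace X₀) (hX₀ : C X₀ uX₀)
    (x y : X₀) (hxy : x ≠ y)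
    (K : Type u) (uK : UniformSpace K) (hKsep : IsSeparatedUnif K uK)
    (hKcomp : @CompactSpace K uK.toTopologicalSpace) :
    C K uK := by
  classical
  letI := uX₀
  letI := uK
  haveI := hKcomp
  haveI : T0Space X₀ := t0Space_iff_uniformity.mpr (hsep X₀ uX₀ hX₀)
  haveI : T0Space K := t0Space_iff_uniformity.mpr hKsep
  haveI : T2Space X₀ := inferInstance
  haveI : T2Space K := inferInstance
  -- the two-point space `D`
  set D : Set X₀ := {x, y} with hD
  letI uD : UniformSpace ↥D := inferInstance
  have hDfin : D.Finite := (Set.finite_singleton y).insert x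
  haveI : Finite ↥D := hDfin.to_subtype
  have hCD : C ↥D uD := by
    refine hclsub X₀ ↥D uX₀ uD hX₀ ⟨Subtype.val, isUniformEmbedding_subtype_val, ?_⟩
    rw [Subtype.range_val]
    exact hDfin.isClosed
  haveI : DiscreteTopology ↥D := inferInstance
  have ha : x ∈ D := Set.mem_insert _ _
  have hb : y ∈ D := Set.mem_insert_of_mem _ rfl
  set a : ↥D := ⟨x, ha⟩ with ha'
  set b : ↥D := ⟨y, hb⟩ with hb'
  have hab : a ≠ b := fun h => hxy (congrArg Subtype.val h)
  have hd_cases : ∀ d : ↥D, d = a ∨ d = b := by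
    rintro ⟨d, hd | hd⟩
    · exact Or.inl (Subtype.ext hd)
    · exact Or.inr (Subtype.ext hd)
  -- the product space `P = (Set K) → D` is in `C`
  letI uP : UniformSpace (Set K → ↥D) := Pi.uniformSpace _
  have hCP : C (Set K → ↥D) uP := hprod (Set K) (fun _ => ↥D) (fun _ => uD) (fun _ => hCD)
  -- embed `Ultrafilter K` into `P`
  set g : Ultrafilter K → (Set K → ↥D) := fun F A => if A ∈ F then a else b with hg
  have hgval : ∀ (F : Ultrafilter K) (A : Set K), g F A = a ↔ A ∈ F := by
    intro F A
    by_cases h : A ∈ F <;> simp [hg, h, Ne.symm hab]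
  have hgvalb : ∀ (F : Ultrafilter K) (A : Set K), g F A = b ↔ A ∉ F := by
    intro F A
    by_cases h : A ∈ F <;> simp [hg, h, hab]
  have ginj : Function.Injective g := by
    intro F G h
    have : ∀ A : Set K, A ∈ F ↔ A ∈ G := by
      intro A
      rw [← hgval F A, ← hgval G A, h]
    exact Ultrafilter.coe_injective (Filter.ext this)
  letI uU : UniformSpace (Ultrafilter K) := UniformSpace.comap g uP
  have hgemb : @IsUniformEmbedding _ _ uU uP g := isUniformEmbedding_comap ginj
  -- the range of `g` is closed in `P`
  have hrange : Set.range g = {f : Set K → ↥D |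
      (∀ A B : Set K, f (A ∩ B) = a ↔ (f A = a ∧ f B = a)) ∧
      (∀ A : Set K, f Aᶜ = a ↔ ¬ f A = a)} := by
    ext f
    constructor
    · rintro ⟨F, rfl⟩
      refine ⟨fun A B => ?_, fun A => ?_⟩
      · simp only [hgval]
        exact Filter.inter_mem_iff
      · simp only [hgval]
        exact Ultrafilter.compl_mem_iff_notMem
    · rintro ⟨h1, h2⟩
      have hempty : ¬ f ∅ = a := by
        intro h
        have hu : f Set.univ = a :=
          ((h1 Set.univ ∅).mp (by rwa [Set.univ_inter])).1
        have := (h2 ∅).mp (by rwa [Set.compl_empty])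
        exact this h
      have huniv : f Set.univ = a := by
        have := h2 ∅
        rw [Set.compl_empty] at this
        exact this.mpr hempty
      set Fl : Filter K :=
        { sets := {A | f A = a}
          univ_sets := huniv
          sets_of_superset := by
            intro A B hA hAB
            have := (h1 A B).mp (by rwa [Set.inter_eq_left.mpr hAB])
            exact this.2
          inter_sets := fun hA hB => (h1 _ _).mpr ⟨hA, hB⟩ } with hFl
      have hmem : ∀ A : Set K, A ∈ Fl ↔ f A = a := fun A => Iff.rfl
      have hcompl : ∀ s : Set K, sᶜ ∉ Fl ↔ s ∈ Fl := by
        intro s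
        rw [hmem, hmem, h2 s, not_not]
      refine ⟨Ultrafilter.ofComplNotMemIff Fl hcompl, funext fun A => ?_⟩
      by_cases h : f A = a
      · have hA : A ∈ Ultrafilter.ofComplNotMemIff Fl hcompl := h
        simp [hg, hA, h]
      · have hA : A ∉ Ultrafilter.ofComplNotMemIff Fl hcompl := h
        rcases hd_cases (f A) with h' | h'
        · exact absurd h' h
        · simp [hg, hA, h']
  have hclosed : @IsClosed _ uP.toTopologicalSpace (Set.range g) := by
    rw [hrange]
    have heq : {f : Set K → ↥D |
        (∀ A B : Set K, f (A ∩ B) = a ↔ (f A = a ∧ f B = a)) ∧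
        (∀ A : Set K, f Aᶜ = a ↔ ¬ f A = a)} =
        ((⋂ A : Set K, ⋂ B : Set K,
          {f : Set K → ↥D | f (A ∩ B) = a ↔ (f A = a ∧ f B = a)}) ∩
         (⋂ A : Set K, {f : Set K → ↥D | f Aᶜ = a ↔ ¬ f A = a})) := by
      ext f
      simp only [Set.mem_inter_iff, Set.mem_iInter, Set.mem_setOf_eq]
    rw [heq]
    refine IsClosed.inter (isClosed_iInter fun A => isClosed_iInter fun B => ?_)
      (isClosed_iInter fun A => ?_)
    · have hc : Continuous fun f : Set K → ↥D => (f (A ∩ B), f A, f B) :=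
        (continuous_apply _).prodMk ((continuous_apply _).prodMk (continuous_apply _))
      exact (isClosed_discrete
        {p : ↥D × ↥D × ↥D | p.1 = a ↔ (p.2.1 = a ∧ p.2.2 = a)}).preimage hc
    · have hc : Continuous fun f : Set K → ↥D => (f Aᶜ, f A) :=
        (continuous_apply _).prodMk (continuous_apply _)
      exact (isClosed_discrete {p : ↥D × ↥D | p.1 = a ↔ ¬ p.2 = a}).preimage hc
  have hCU : C (Ultrafilter K) uU :=
    hclsub _ _ uP uU hCP ⟨g, hgemb, hclosed⟩
  -- the topology of `uU` is the standard ultrafilter topology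
  have htop : uU.toTopologicalSpace = Ultrafilter.topologicalSpace := by
    rw [show uU.toTopologicalSpace
        = TopologicalSpace.induced g uP.toTopologicalSpace from rfl]
    refine le_antisymm ?_ ?_
    · refine le_generateFrom ?_
      rintro s ⟨A, rfl⟩
      have hV : IsOpen ((fun f : Set K → ↥D => f A) ⁻¹' {a}) :=
        (isOpen_discrete ({a} : Set ↥D)).preimage (continuous_apply A)
      refine isOpen_induced_iff.mpr ⟨(fun f : Set K → ↥D => f A) ⁻¹' {a}, hV, ?_⟩
      ext u
      simp only [Set.mem_preimage, Set.mem_singleton_iff, Set.mem_setOf_eq, hgval]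
    · refine continuous_iff_le_induced.mp ?_
      refine continuous_pi fun A => ?_
      rw [continuous_discrete_rng]
      intro d
      rcases hd_cases d with h' | h'
      · have hpre : (fun u : Ultrafilter K => g u A) ⁻¹' {d}
            = {u : Ultrafilter K | A ∈ u} := by
          ext u
          simp only [Set.mem_preimage, Set.mem_singleton_iff, Set.mem_setOf_eq, h', hgval]
        rw [hpre]
        exact ultrafilter_isOpen_basic A
      · have hpre : (fun u : Ultrafilter K => g u A) ⁻¹' {d}
            = {u : Ultrafilter K | Aᶜ ∈ u} := by
          ext u
          simp only [Set.mem_preimage, Set.mem_singleton_iff, Set.mem_setOf_eq, h', hgvalb,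
            Ultrafilter.compl_mem_iff_notMem]
        rw [hpre]
        exact ultrafilter_isOpen_basic Aᶜ
  -- map `Ultrafilter K` onto `K`
  haveI hcomp' : @CompactSpace (Ultrafilter K) uU.toTopologicalSpace := by
    rw [htop]; infer_instance
  have hcont : @Continuous _ _ uU.toTopologicalSpace uK.toTopologicalSpace
      (Ultrafilter.extend (id : K → K)) := by
    rw [htop]
    exact continuous_ultrafilter_extend id
  have huc : @UniformContinuous _ _ uU uK (Ultrafilter.extend (id : K → K)) :=
    @CompactSpace.uniformContinuous_of_continuous _ _ uU uK hcomp' _ hcont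
  have hsurjπ : Function.Surjective (Ultrafilter.extend (id : K → K)) := fun z =>
    ⟨pure z, congrFun (ultrafilter_extend_extends (id : K → K)) z⟩
  exact hsurj (Ultrafilter K) K uU uK hCU hKsep
    ⟨Ultrafilter.extend (id : K → K), huc, hsurjπ⟩
end

section
/- Let C be an isomorphism-closed class of separated uniform spaces that is closed under products, closed under closed subspaces, and closed under dense images. If C contains a space with at least two points and also contains a space that is not compact, then the half-open interval (0,1], equipped with the uniformity induced from the standard metric uniformity of the real line, belongs to C. -/
universe u

open Uniformity


/-- `C` is closed under dense images: images of uniformly continuous maps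
with dense range, landing in separated uniform spaces. -/
def UnifClass.ClosedUnderDenseImages (C : UnifClass.{u}) : Prop :=
  ∀ (X Y : Type u) (uX : UniformSpace X) (uY : UniformSpace Y),
    C X uX → IsSeparatedUnif Y uY →
    (∃ f : X → Y, @UniformContinuous X Y uX uY f ∧
      @DenseRange Y uY.toTopologicalSpace X f) → C Y uY




open Filter Set in
private lemma abs_min_one_sub_min_one (p q : ℝ) : |min 1 p - min 1 q| ≤ |p - q| := by
  rcases le_total 1 p with h1p | h1p <;> rcases le_total 1 q with h1q | h1q
  · rw [min_eq_left h1p, min_eq_left h1q]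
    simpa using abs_nonneg (p - q)
  · rw [min_eq_left h1p, min_eq_right h1q, abs_of_nonneg (by linarith)]
    calc 1 - q ≤ p - q := by linarith
      _ ≤ |p - q| := le_abs_self _
  · rw [min_eq_right h1p, min_eq_left h1q, abs_of_nonpos (by linarith), neg_sub,
      abs_sub_comm]
    calc 1 - p ≤ q - p := by linarith
      _ ≤ |q - p| := le_abs_self _
  · rw [min_eq_right h1p, min_eq_right h1q]

noncomputable def binR (a : ℕ → ℝ) : ℝ := ∑' n, a n / 2 / 2 ^ n

private lemma binR_summable {a : ℕ → ℝ} (h0 : ∀ n, 0 ≤ a n) (h1 : ∀ n, a n ≤ 1) :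
    Summable fun n => a n / 2 / 2 ^ n := by
  refine Summable.of_nonneg_of_le (fun n => by have := h0 n; positivity) (fun n => ?_)
    (summable_geometric_two' 1)
  gcongr
  exact h1 n

private lemma binR_nonneg {a : ℕ → ℝ} (h0 : ∀ n, 0 ≤ a n) : 0 ≤ binR a :=
  tsum_nonneg fun n => by have := h0 n; positivity

private lemma binR_le_one {a : ℕ → ℝ} (h0 : ∀ n, 0 ≤ a n) (h1 : ∀ n, a n ≤ 1) :
    binR a ≤ 1 := by
  have h := Summable.tsum_le_tsum (f := fun n => a n / 2 / 2 ^ n) (g := fun n => (1:ℝ) / 2 / 2 ^ n)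
    (fun n => by
      show a n / 2 / 2 ^ n ≤ (1:ℝ) / 2 / 2 ^ n
      gcongr
      exact h1 n)
    (binR_summable h0 h1) (summable_geometric_two' 1)
  rw [binR]
  exact h.trans (le_of_eq (tsum_geometric_two' 1))

private lemma binR_tail_bound {a : ℕ → ℝ} (h0 : ∀ n, 0 ≤ a n) (h1 : ∀ n, a n ≤ 1) (n : ℕ) :
    0 ≤ ∑' i, a (i + n) / 2 / 2 ^ (i + n) ∧
      ∑' i, a (i + n) / 2 / 2 ^ (i + n) ≤ (1/2 : ℝ) ^ n := by
  have hs : Summable fun i => a (i + n) / 2 / 2 ^ (i + n) :=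
    (summable_nat_add_iff (f := fun m => a m / 2 / 2 ^ m) n).2 (binR_summable h0 h1)
  constructor
  · exact tsum_nonneg fun i => by have := h0 (i + n); positivity
  · have hb : ∀ i, a (i + n) / 2 / 2 ^ (i + n) ≤ (1 / 2 / 2 ^ i) * (1/2 : ℝ) ^ n := by
      intro i
      have h2 : ((2:ℝ)) ^ (i + n) = 2 ^ i * 2 ^ n := pow_add 2 i n
      have h3 : a (i + n) / 2 / 2 ^ (i + n) ≤ 1 / 2 / 2 ^ (i + n) := by
        gcongr
        exact h1 _
      refine h3.trans (le_of_eq ?_)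
      rw [h2, one_div, inv_pow]
      field_simp
    have hsum : Summable fun i => ((1:ℝ) / 2 / 2 ^ i) * (1/2 : ℝ) ^ n :=
      (summable_geometric_two' 1).mul_right _
    calc ∑' i, a (i + n) / 2 / 2 ^ (i + n) ≤ ∑' i, ((1:ℝ) / 2 / 2 ^ i) * (1/2 : ℝ) ^ n :=
          Summable.tsum_le_tsum hb hs hsum
      _ = (∑' i, (1:ℝ) / 2 / 2 ^ i) * (1/2 : ℝ) ^ n := tsum_mul_right
      _ = (1/2 : ℝ) ^ n := by rw [tsum_geometric_two' 1, one_mul]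

private lemma binR_dist {a b : ℕ → ℝ} (h0a : ∀ n, 0 ≤ a n) (h1a : ∀ n, a n ≤ 1)
    (h0b : ∀ n, 0 ≤ b n) (h1b : ∀ n, b n ≤ 1) (n : ℕ) (hab : ∀ k < n, a k = b k) :
    |binR a - binR b| ≤ (1/2 : ℝ) ^ n := by
  have hsa := binR_summable h0a h1a
  have hsb := binR_summable h0b h1b
  have ea := Summable.sum_add_tsum_nat_add (f := fun k => a k / 2 / 2 ^ k) n hsa
  have eb := Summable.sum_add_tsum_nat_add (f := fun k => b k / 2 / 2 ^ k) n hsb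
  have hheads : ∑ k ∈ Finset.range n, a k / 2 / 2 ^ k
      = ∑ k ∈ Finset.range n, b k / 2 / 2 ^ k :=
    Finset.sum_congr rfl fun k hk => by rw [hab k (Finset.mem_range.1 hk)]
  have hta := binR_tail_bound h0a h1a n
  have htb := binR_tail_bound h0b h1b n
  have hdiff : binR a - binR b
      = (∑' i, a (i + n) / 2 / 2 ^ (i + n)) - ∑' i, b (i + n) / 2 / 2 ^ (i + n) := by
    rw [binR, binR, ← ea, ← eb, hheads]; ring
  rw [hdiff, abs_le]
  exact ⟨by linarith [hta.1, hta.2, htb.1, htb.2], by linarith [hta.1, hta.2, htb.1, htb.2]⟩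

private lemma binR_surj {t : ℝ} (h0 : 0 ≤ t) (h1 : t ≤ 1) :
    ∃ a : ℕ → ℝ, (∀ n, a n = 0 ∨ a n = 1) ∧ binR a = t := by
  classical
  let r : ℕ → ℝ := fun n => Nat.rec t (fun _ rn => if 2 * rn ≤ 1 then 2 * rn else 2 * rn - 1) n
  have hr0 : r 0 = t := rfl
  have hrs : ∀ n, r (n + 1) = if 2 * r n ≤ 1 then 2 * r n else 2 * r n - 1 := fun n => rfl
  let a : ℕ → ℝ := fun n => if 2 * r n ≤ 1 then 0 else 1
  have ha01 : ∀ n, a n = 0 ∨ a n = 1 := by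
    intro n
    by_cases h : 2 * r n ≤ 1
    · left; simp [a, h]
    · right; simp [a, h]
  have h0a : ∀ n, 0 ≤ a n := fun n => by rcases ha01 n with h | h <;> rw [h] <;> norm_num
  have h1a : ∀ n, a n ≤ 1 := fun n => by rcases ha01 n with h | h <;> rw [h] <;> norm_num
  have hmem : ∀ n, 0 ≤ r n ∧ r n ≤ 1 := by
    intro n
    induction n with
    | zero => exact ⟨h0, h1⟩
    | succ n ih =>
      rw [hrs]
      split_ifs with h
      · exact ⟨by linarith [ih.1], by linarith⟩
      · have := not_le.1 h
        exact ⟨by linarith, by linarith [ih.2]⟩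
  have key : ∀ n, ∑ k ∈ Finset.range n, a k / 2 / 2 ^ k = t - r n / 2 ^ n := by
    intro n
    induction n with
    | zero => simp [hr0]
    | succ n ih =>
      rw [Finset.sum_range_succ, ih]
      by_cases h : 2 * r n ≤ 1
      · have hra : r (n + 1) = 2 * r n := by rw [hrs]; simp [h]
        have haa : a n = 0 := by simp [a, h]
        rw [hra, haa, pow_succ]
        have h2 : (2:ℝ) ^ n > 0 := by positivity
        field_simp
        ring
      · have hra : r (n + 1) = 2 * r n - 1 := by rw [hrs]; simp [h]
        have haa : a n = 1 := by simp [a, h]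
        rw [hra, haa, pow_succ]
        have h2 : (2:ℝ) ^ n > 0 := by positivity
        field_simp
        ring
  have hs := binR_summable h0a h1a
  obtain ⟨L, hL⟩ := hs
  have hsq : Filter.Tendsto (fun n => r n / 2 ^ n) Filter.atTop (nhds 0) := by
    refine squeeze_zero (fun n => by have := (hmem n).1; positivity) (fun n => ?_)
      (tendsto_pow_atTop_nhds_zero_of_lt_one (by norm_num) (by norm_num : (1/2:ℝ) < 1))
    rw [div_le_iff₀ (by positivity : (0:ℝ) < 2 ^ n)]
    have : ((1:ℝ)/2) ^ n * 2 ^ n = 1 := by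
      rw [one_div, inv_pow, inv_mul_cancel₀ (by positivity : ((2:ℝ)) ^ n ≠ 0)]
    rw [this]
    exact (hmem n).2
  have hT : Filter.Tendsto (fun n => ∑ k ∈ Finset.range n, a k / 2 / 2 ^ k)
      Filter.atTop (nhds t) := by
    simp only [key]
    simpa using Filter.Tendsto.sub (tendsto_const_nhds (x := t)) hsq
  have hLt : L = t := tendsto_nhds_unique hL.tendsto_sum_nat hT
  exact ⟨a, ha01, by rw [binR, hL.tsum_eq, hLt]⟩

open Filter Set in
private lemma metric_urysohn {X : Type} [PseudoMetricSpace X] (z : X) {V : Set (X × X)}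
    (hV : V ∈ 𝓤 X) :
    ∃ f : X → ℝ, UniformContinuous f ∧ (∀ w, f w ∈ Set.Icc (0:ℝ) 1) ∧ f z = 0 ∧
      ∀ w, (z, w) ∉ V → f w = 1 := by
  obtain ⟨ε, hε, hεV⟩ := Metric.mem_uniformity_dist.1 hV
  refine ⟨fun w => min 1 (dist z w / ε), ?_, ?_, ?_, ?_⟩
  · rw [Metric.uniformContinuous_iff]
    intro δ hδ
    refine ⟨δ * ε, by positivity, fun {a b} hab => ?_⟩
    have h1 := abs_min_one_sub_min_one (dist z a / ε) (dist z b / ε)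
    rw [Real.dist_eq]
    have h2 : |dist z a / ε - dist z b / ε| = |dist z a - dist z b| / ε := by
      rw [← sub_div, abs_div, abs_of_pos hε]
    have h3 : |dist z a - dist z b| ≤ dist a b := by
      rw [dist_comm z a, dist_comm z b]
      exact abs_dist_sub_le a b z
    calc |min 1 (dist z a / ε) - min 1 (dist z b / ε)|
        ≤ |dist z a - dist z b| / ε := h2 ▸ h1
      _ ≤ dist a b / ε := by gcongr
      _ < δ * ε / ε := by gcongr
      _ = δ := by field_simp
  · intro w
    exact ⟨le_min (by norm_num) (by positivity), min_le_left _ _⟩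
  · simp [dist_self]
  · intro w hw
    have hge : ¬ dist z w < ε := fun h => hw (hεV h)
    exact min_eq_left ((one_le_div hε).2 (not_lt.1 hge))

open Filter Set in
private lemma metric_of_core {X : Type} (u' : UniformSpace X)
    (hcg : @Filter.IsCountablyGenerated (X × X) (@uniformity X u')) (z : X) {V : Set (X × X)}
    (hV : V ∈ @uniformity X u') :
    ∃ f : X → ℝ, @UniformContinuous X ℝ u' _ f ∧ (∀ w, f w ∈ Set.Icc (0:ℝ) 1) ∧ f z = 0 ∧
      ∀ w, (z, w) ∉ V → f w = 1 := by
  obtain ⟨m, hm⟩ := @UniformSpace.metrizable_uniformity X u' hcg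
  subst hm
  exact metric_urysohn z hV

open Filter Set in
private lemma unif_urysohn {X : Type} (uX : UniformSpace X) (z : X) {V : Set (X × X)}
    (hV : V ∈ @uniformity X uX) :
    ∃ f : X → ℝ, @UniformContinuous X ℝ uX _ f ∧ (∀ w, f w ∈ Set.Icc (0:ℝ) 1) ∧ f z = 0 ∧
      ∀ w, (z, w) ∉ V → f w = 1 := by
  letI := uX
  obtain ⟨V0, hV0, hV0s, hV0c⟩ := comp_symm_mem_uniformity_sets hV
  have step : ∀ W : {W : Set (X × X) // W ∈ 𝓤 X ∧ SetRel.IsSymm W},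
      ∃ W' : {W : Set (X × X) // W ∈ 𝓤 X ∧ SetRel.IsSymm W}, SetRel.comp W'.1 W'.1 ⊆ W.1 := by
    intro W
    obtain ⟨t, ht, hts, htc⟩ := comp_symm_mem_uniformity_sets W.2.1
    exact ⟨⟨t, ht, hts⟩, htc⟩
  choose st hst using step
  let Wc : ℕ → {W : Set (X × X) // W ∈ 𝓤 X ∧ SetRel.IsSymm W} :=
    fun n => Nat.rec ⟨V0, hV0, hV0s⟩ (fun _ p => st p) n
  let W : ℕ → Set (X × X) := fun n => (Wc n).1
  have hWmem : ∀ n, W n ∈ 𝓤 X := fun n => (Wc n).2.1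
  have hWsym : ∀ n, SetRel.IsSymm (W n) := fun n => (Wc n).2.2
  have hWcomp : ∀ n, SetRel.comp (W (n + 1)) (W (n + 1)) ⊆ W n := fun n => hst (Wc n)
  have hWsub : ∀ n, W (n + 1) ⊆ W n := by
    intro n p hp
    obtain ⟨c, d⟩ := p
    exact hWcomp n ⟨d, hp, refl_mem_uniformity (hWmem (n + 1))⟩
  have hWanti : Antitone W := antitone_nat_of_succ_le hWsub
  let l : Filter (X × X) := ⨅ n, 𝓟 (W n)
  have hdir : Directed (· ≥ ·) fun n => (𝓟 (W n) : Filter (X × X)) := fun m n =>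
    ⟨max m n, principal_mono.2 (hWanti (le_max_left m n)),
      principal_mono.2 (hWanti (le_max_right m n))⟩
  have hmeml : ∀ {s : Set (X × X)}, s ∈ l ↔ ∃ n, W n ⊆ s := by
    intro s
    rw [mem_iInf_of_directed hdir]
    simp only [mem_principal]
  have hWl : ∀ n, W n ∈ l := fun n => hmeml.2 ⟨n, subset_rfl⟩
  let core : UniformSpace.Core X := UniformSpace.Core.mk' l
    (by
      intro r hr x
      obtain ⟨n, hn⟩ := hmeml.1 hr
      exact hn (refl_mem_uniformity (hWmem n)))
    (by
      intro r hr
      obtain ⟨n, hn⟩ := hmeml.1 hr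
      refine hmeml.2 ⟨n, ?_⟩
      rintro ⟨c, d⟩ hp
      exact hn ((hWsym n).symm _ _ hp))
    (by
      intro r hr
      obtain ⟨n, hn⟩ := hmeml.1 hr
      exact ⟨W (n + 1), hWl (n + 1), (hWcomp n).trans hn⟩)
  have hVl : V ∈ l := by
    refine hmeml.2 ⟨0, ?_⟩
    rintro ⟨c, d⟩ hp
    exact hV0c ⟨d, hp, refl_mem_uniformity hV0⟩
  have hcg : Filter.IsCountablyGenerated l := Filter.isCountablyGenerated_seq W
  have hle : @uniformity X uX ≤ l := le_iInf fun n => le_principal_iff.2 (hWmem n)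
  obtain ⟨f, hfu, hfm, hfz, hf1⟩ :=
    @metric_of_core X (UniformSpace.ofCore core) hcg z V hVl
  refine ⟨f, ?_, hfm, hfz, hf1⟩
  exact Filter.Tendsto.mono_left hfu hle

open Filter Set in
theorem Ioc_mem_of_nontrivial_noncompact_T2Unif
    (C : UnifClass.{0}) (hiso : C.IsoClosed)
    (hsepC : ∀ (X : Type) (uX : UniformSpace X), C X uX → IsSeparatedUnif X uX)
    (hprod : C.ClosedUnderProducts) (hclsub : C.ClosedUnderClosedSubspaces)
    (hdense : C.ClosedUnderDenseImages)
    (X₀ : Type) (uX₀ : UniformSpace X₀) (hX₀ : C X₀ uX₀)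
    (x y : X₀) (hxy : x ≠ y)
    (X₁ : Type) (uX₁ : UniformSpace X₁) (hX₁ : C X₁ uX₁)
    (hX₁nc : ¬ @CompactSpace X₁ uX₁.toTopologicalSpace) :
    C (Set.Ioc (0 : ℝ) 1) inferInstance := by
  classical
  letI := uX₀
  letI := uX₁
  -- Step 0: separation of points by entourages in X₀
  have hsep₀ := hsepC X₀ uX₀ hX₀
  have hne : ∀ a b : X₀, a ≠ b → ∃ Vab ∈ 𝓤 X₀, (a, b) ∉ Vab := by
    intro a b hab
    by_contra h
    push_neg at h
    exact hab (hsep₀ a b h)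
  -- Step 1: the two-point subspace S = {x, y} is in C
  set S : Set X₀ := {x, y} with hS
  have hSclosed : IsClosed S := by
    rw [← isOpen_compl_iff, isOpen_iff_mem_nhds]
    intro z hz
    have hzx : z ≠ x := fun h => hz (by simp [hS, h])
    have hzy : z ≠ y := fun h => hz (by simp [hS, h])
    obtain ⟨Vx, hVx, hVxn⟩ := hne z x hzx
    obtain ⟨Vy, hVy, hVyn⟩ := hne z y hzy
    rw [UniformSpace.mem_nhds_iff]
    refine ⟨Vx ∩ Vy, inter_mem hVx hVy, ?_⟩
    intro w hw
    intro hwS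
    rcases hwS with h | h
    · exact hVxn (by rw [← h]; exact hw.1)
    · exact hVyn (by rw [← show w = y from h]; exact hw.2)
  have hCS : C (↥S) inferInstance := by
    refine hclsub X₀ (↥S) uX₀ inferInstance hX₀ ⟨Subtype.val, isUniformEmbedding_subtype_val, ?_⟩
    rw [Subtype.range_coe]
    exact hSclosed
  -- the subtype S carries a discrete uniformity
  obtain ⟨V₁, hV₁, hV₁n⟩ := hne x y hxy
  obtain ⟨V₂, hV₂, hV₂n⟩ := hne y x hxy.symm
  have hdiagS : {p : ↥S × ↥S | p.1 = p.2} ∈ 𝓤 (↥S) := by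
    rw [uniformity_subtype]
    refine mem_of_superset (preimage_mem_comap (inter_mem hV₁ hV₂)) ?_
    rintro ⟨a, b⟩ hab
    have ha := a.2
    have hb := b.2
    rcases ha with ha | ha <;> rcases hb with hb | hb
    · exact Subtype.ext (by rw [ha, show (b : X₀) = x from hb])
    · exfalso
      apply hV₁n
      have : ((a : X₀), (b : X₀)) ∈ V₁ := hab.1
      rwa [ha, show (b : X₀) = y from hb] at this
    · exfalso
      apply hV₂n
      have : ((a : X₀), (b : X₀)) ∈ V₂ := hab.2
      rwa [show (a : X₀) = y from ha, hb] at this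
    · exact Subtype.ext (by rw [show (a : X₀) = y from ha, show (b : X₀) = y from hb])
  -- Step 2: the Cantor-like space (ℕ → S) is in C
  have hCCantor : C (ℕ → ↥S) inferInstance :=
    hprod ℕ (fun _ => ↥S) (fun _ => inferInstance) (fun _ => hCS)
  -- the binary-expansion map c : (ℕ → S) → Icc 0 1
  let xS : ↥S := ⟨x, Or.inl rfl⟩
  let yS : ↥S := ⟨y, Or.inr rfl⟩
  let φS : ↥S → ℝ := fun s => if (s : X₀) = y then 1 else 0
  have hφ01 : ∀ s, φS s = 0 ∨ φS s = 1 := by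
    intro s
    by_cases h : (s : X₀) = y
    · right; simp [φS, h]
    · left; simp [φS, h]
  have hφ0 : ∀ s, 0 ≤ φS s := fun s => by rcases hφ01 s with h | h <;> rw [h] <;> norm_num
  have hφ1 : ∀ s, φS s ≤ 1 := fun s => by rcases hφ01 s with h | h <;> rw [h] <;> norm_num
  let c : (ℕ → ↥S) → ↥(Set.Icc (0:ℝ) 1) := fun v =>
    ⟨binR (fun n => φS (v n)),
      ⟨binR_nonneg (fun n => hφ0 _), binR_le_one (fun n => hφ0 _) (fun n => hφ1 _)⟩⟩
  have hcu : UniformContinuous c := by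
    apply UniformContinuous.subtype_mk
    rw [uniformContinuous_def]
    intro r hr
    obtain ⟨ε, hε, hεr⟩ := Metric.mem_uniformity_dist.1 hr
    obtain ⟨n, hn⟩ := exists_pow_lt_of_lt_one hε (by norm_num : (1/2 : ℝ) < 1)
    have hk : ∀ k : ℕ, {p : (ℕ → ↥S) × (ℕ → ↥S) | p.1 k = p.2 k} ∈ 𝓤 (ℕ → ↥S) := by
      intro k
      exact (Pi.uniformContinuous_proj (fun _ : ℕ => ↥S) k) hdiagS
    have hE : {p : (ℕ → ↥S) × (ℕ → ↥S) | ∀ k < n, p.1 k = p.2 k} ∈ 𝓤 (ℕ → ↥S) := by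
      have hbi := (Filter.biInter_mem (Set.finite_Iio n)).2 (fun k _ => hk k)
      refine mem_of_superset hbi ?_
      intro p hp k hkn
      have := Set.mem_iInter₂.1 hp k (Set.mem_Iio.2 hkn)
      exact this
    refine Filter.mem_of_superset hE ?_
    rintro ⟨v₁, v₂⟩ hagree
    have hb := binR_dist (a := fun k => φS (v₁ k)) (b := fun k => φS (v₂ k))
      (fun k => hφ0 _) (fun k => hφ1 _) (fun k => hφ0 _) (fun k => hφ1 _) n
      (fun k hkn => congrArg φS (hagree k hkn))
    have hlt : dist (binR fun k => φS (v₁ k)) (binR fun k => φS (v₂ k)) < ε := by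
      rw [Real.dist_eq]
      exact lt_of_le_of_lt hb hn
    exact hεr hlt
  have hcsurj : Function.Surjective c := by
    rintro ⟨t, ht0, ht1⟩
    obtain ⟨a, ha01, hat⟩ := binR_surj ht0 ht1
    refine ⟨fun n => if a n = 1 then yS else xS, ?_⟩
    apply Subtype.ext
    show binR (fun n => φS (if a n = 1 then yS else xS)) = t
    rw [← hat]
    congr 1
    funext n
    rcases ha01 n with h | h
    · rw [h]
      have : ¬ ((0:ℝ) = 1) := by norm_num
      simp only [h, if_neg this]
      show φS xS = 0
      simp [φS, xS, hxy]
    · simp only [h, if_pos rfl]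
      show φS yS = 1
      simp [φS, yS]
  -- Step 3: a cube point q in the closure of the canonical image of X₁, outside it
  let I : Type := {f : X₁ → ↥(Set.Icc (0:ℝ) 1) // UniformContinuous f}
  let Cube : Type := I → ↥(Set.Icc (0:ℝ) 1)
  let e : X₁ → Cube := fun z i => i.1 z
  have hue : UniformContinuous e := uniformContinuous_pi.2 fun i => i.2
  haveI : CompactSpace (↥(Set.Icc (0:ℝ) 1)) := isCompact_iff_compactSpace.1 isCompact_Icc
  have hnc : ¬ IsCompact (Set.univ : Set X₁) := fun h => hX₁nc (isCompact_univ_iff.1 h)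
  rw [isCompact_iff_ultrafilter_le_nhds] at hnc
  push_neg at hnc
  obtain ⟨U, -, hU2⟩ := hnc
  let Uc : Ultrafilter Cube := U.map e
  obtain ⟨q, -, hq⟩ := isCompact_univ.ultrafilter_le_nhds Uc
    (le_principal_iff.2 univ_mem)
  have hTe : Filter.Tendsto e (↑U) (nhds q) := by
    rw [Filter.Tendsto, ← Ultrafilter.coe_map]
    exact hq
  have hqcl : q ∈ closure (Set.range e) := by
    rw [mem_closure_iff_nhds]
    intro N hN
    exact Filter.nonempty_of_mem (Filter.inter_mem (hq hN)
      (Ultrafilter.mem_map.2 (Filter.univ_mem' fun a => Set.mem_range_self a)))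
  have hqne : q ∉ Set.range e := by
    rintro ⟨z, rfl⟩
    have hnz : ¬ (↑U ≤ nhds z) := hU2 z (Set.mem_univ z)
    obtain ⟨N, hN, hNU⟩ : ∃ N ∈ nhds z, N ∉ ↑U := by
      by_contra h
      push_neg at h
      exact hnz fun s hs => h s hs
    rw [UniformSpace.mem_nhds_iff] at hN
    obtain ⟨V, hV, hball⟩ := hN
    have hBn : UniformSpace.ball z V ∉ ↑U := fun h => hNU (Filter.mem_of_superset h hball)
    have hBc : (UniformSpace.ball z V)ᶜ ∈ U := Ultrafilter.compl_mem_iff_notMem.2 hBn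
    obtain ⟨f, hfu, hfm, hfz, hf1⟩ := unif_urysohn uX₁ z hV
    let fI : I := ⟨fun w => ⟨f w, hfm w⟩, hfu.subtype_mk _⟩
    have hev : Filter.Tendsto (fun v : Cube => ((v fI : ℝ))) (nhds (e z)) (nhds ((e z fI : ℝ))) :=
      (continuous_subtype_val.comp (continuous_apply fI)).continuousAt
    have hUev : Filter.Tendsto (fun w : X₁ => ((e w fI : ℝ))) (↑U) (nhds ((e z fI : ℝ))) :=
      hev.comp hTe
    have hconst : {w : X₁ | ((e w fI : ℝ)) = 1} ∈ U := by
      refine Filter.mem_of_superset hBc ?_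
      intro w hw
      exact hf1 w hw
    have hEq : (fun w : X₁ => ((e w fI : ℝ))) =ᶠ[↑U] fun _ => (1:ℝ) := hconst
    have h1 : Filter.Tendsto (fun _ : X₁ => (1:ℝ)) (↑U) (nhds ((e z fI : ℝ))) :=
      (Filter.tendsto_congr' hEq).1 hUev
    have : (e z fI : ℝ) = 1 := tendsto_nhds_unique h1 tendsto_const_nhds
    rw [show ((e z fI : ℝ)) = f z from rfl, hfz] at this
    norm_num at this
  -- Step 4: the space Y = (range e × Icc) ∪ ({q} × (0,1]) is in C, as a dense image
  let Amb : Type := Cube × ↥(Set.Icc (0:ℝ) 1)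
  let Ys : Set Amb := (Set.range e ×ˢ (Set.univ : Set (↥(Set.Icc (0:ℝ) 1)))) ∪
    ({q} ×ˢ {v : ↥(Set.Icc (0:ℝ) 1) | 0 < (v : ℝ)})
  let Fam : Bool → Type := fun b => bif b then X₁ else (ℕ → ↥S)
  letI tFam : ∀ b, UniformSpace (Fam b) := fun b =>
    Bool.rec (motive := fun b => UniformSpace (Fam b))
      (inferInstance : UniformSpace (ℕ → ↥S)) uX₁ b
  have hCZ : C (∀ b, Fam b) (Pi.uniformSpace Fam) :=
    hprod Bool Fam tFam (fun b => by cases b <;> [exact hCCantor; exact hX₁])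
  let g : (∀ b, Fam b) → ↥Ys := fun v =>
    ⟨(e (v true), c (v false)), Or.inl (Set.mk_mem_prod (Set.mem_range_self _) (Set.mem_univ _))⟩
  have hgu : UniformContinuous g := by
    apply UniformContinuous.subtype_mk
    exact (hue.comp (Pi.uniformContinuous_proj Fam true)).prodMk
      (hcu.comp (Pi.uniformContinuous_proj Fam false))
  have hYsep : IsSeparatedUnif (↥Ys) inferInstance := by
    intro p₁ p₂ h
    apply Subtype.ext
    apply eq_of_uniformity (α := Amb)
    intro V hV
    exact h _ (by rw [uniformity_subtype]; exact preimage_mem_comap hV)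
  have hgd : DenseRange g := by
    intro p
    rw [closure_subtype]
    have himg : (Subtype.val '' Set.range g) = Set.range e ×ˢ Set.range c := by
      ext ⟨a, b⟩
      constructor
      · rintro ⟨w, ⟨v, rfl⟩, hw⟩
        rw [← hw]
        exact ⟨⟨v true, rfl⟩, ⟨v false, rfl⟩⟩
      · rintro ⟨⟨z1, rfl⟩, ⟨v0, rfl⟩⟩
        exact ⟨g (fun b => Bool.rec v0 z1 b), ⟨_, rfl⟩, rfl⟩
    rw [himg, closure_prod_eq]
    have hcr : closure (Set.range c) = Set.univ := by
      rw [Set.range_eq_univ.2 hcsurj, closure_univ]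
    constructor
    · rcases p.2 with hL | hR
      · exact subset_closure hL.1
      · have : (p : Amb).1 = q := hR.1
        rw [this]
        exact hqcl
    · rw [hcr]
      exact Set.mem_univ _
  have hCY : C (↥Ys) inferInstance :=
    hdense (∀ b, Fam b) (↥Ys) (Pi.uniformSpace Fam) inferInstance hCZ hYsep ⟨g, hgu, hgd⟩
  -- Step 5: (0, 1] is a closed subspace of Y
  let φ : ↥(Set.Ioc (0:ℝ) 1) → ↥Ys := fun t =>
    ⟨(q, ⟨(t : ℝ), ⟨le_of_lt t.2.1, t.2.2⟩⟩), Or.inr (Set.mk_mem_prod rfl t.2.1)⟩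
  have hφemb : IsUniformEmbedding φ := by
    constructor
    · constructor
      show Filter.comap (fun p : ↥(Set.Ioc (0:ℝ) 1) × ↥(Set.Ioc (0:ℝ) 1) => (φ p.1, φ p.2))
        (𝓤 (↥Ys)) = 𝓤 (↥(Set.Ioc (0:ℝ) 1))
      rw [uniformity_subtype (p := fun a : Amb => a ∈ Ys), Filter.comap_comap]
      rw [show (𝓤 Amb) = ((𝓤 Cube).comap fun p : Amb × Amb => (p.1.1, p.2.1)) ⊓
        ((𝓤 (↥(Set.Icc (0:ℝ) 1))).comap fun p : Amb × Amb => (p.1.2, p.2.2)) from rfl]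
      rw [Filter.comap_inf, Filter.comap_comap, Filter.comap_comap]
      have h1 : Filter.comap
          ((fun p : Amb × Amb => (p.1.1, p.2.1)) ∘
            ((fun q' : ↥Ys × ↥Ys => ((q'.1 : Amb), (q'.2 : Amb))) ∘
              (fun p : ↥(Set.Ioc (0:ℝ) 1) × ↥(Set.Ioc (0:ℝ) 1) => (φ p.1, φ p.2))))
          (𝓤 Cube) = ⊤ := by
        have hfun : ((fun p : Amb × Amb => (p.1.1, p.2.1)) ∘
            ((fun q' : ↥Ys × ↥Ys => ((q'.1 : Amb), (q'.2 : Amb))) ∘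
              (fun p : ↥(Set.Ioc (0:ℝ) 1) × ↥(Set.Ioc (0:ℝ) 1) => (φ p.1, φ p.2)))) =
            fun _ => (q, q) := rfl
        rw [hfun]
        exact Filter.comap_const_of_mem fun s hs => refl_mem_uniformity hs
      rw [h1, top_inf_eq]
      rw [show (𝓤 (↥(Set.Icc (0:ℝ) 1))) =
        Filter.comap (fun q' : ↥(Set.Icc (0:ℝ) 1) × ↥(Set.Icc (0:ℝ) 1) =>
          ((q'.1 : ℝ), (q'.2 : ℝ))) (𝓤 ℝ) from rfl]
      rw [Filter.comap_comap]
      rw [show (𝓤 (↥(Set.Ioc (0:ℝ) 1))) =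
        Filter.comap (fun q' : ↥(Set.Ioc (0:ℝ) 1) × ↥(Set.Ioc (0:ℝ) 1) =>
          ((q'.1 : ℝ), (q'.2 : ℝ))) (𝓤 ℝ) from rfl]
      rfl
    · intro t₁ t₂ ht
      have : ((t₁ : ℝ)) = ((t₂ : ℝ)) := by
        have := congrArg (fun p : ↥Ys => (((p : Amb).2 : ℝ))) ht
        exact this
      exact Subtype.ext this
  have hφcl : IsClosed (Set.range φ) := by
    have hr : Set.range φ = (fun p : ↥Ys => (p : Amb).1) ⁻¹' {q} := by
      ext p
      constructor
      · rintro ⟨t, rfl⟩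
        rfl
      · intro hp
        have hp1 : (p : Amb).1 = q := hp
        rcases p.2 with hL | hR
        · exact absurd (hp1 ▸ hL.1) hqne
        · refine ⟨⟨((p : Amb).2 : ℝ), ⟨hR.2, ((p : Amb).2).2.2⟩⟩, ?_⟩
          apply Subtype.ext
          apply Prod.ext
          · exact hp1.symm
          · exact Subtype.ext rfl
    rw [hr]
    exact isClosed_singleton.preimage (continuous_fst.comp continuous_subtype_val)
  exact hclsub (↥Ys) (↥(Set.Ioc (0:ℝ) 1)) inferInstance inferInstance hCY ⟨φ, hφemb, hφcl⟩
end
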